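/- arXiv:2506.01178 — 6 statements merged into one kernel-verified Lean document; each statement's English description precedes it below -/
import Mathlib

section
/- Let d ∈ ℕ and Θ,γ ∈ ℝ^d with all entries strictly positive be such that ∑_{ℓ∈[d]} Θ_ℓ/γ_ℓ < 1. Then for every θ,ε ∈ ℝ^d with nonnegative entries such that θ_ℓ ≤ Θ_ℓ for every ℓ ∈ [d], and every z ∈ ℕ, one has ∑_{ℓ∈[d]} ⌊(θ_ℓ·z − ε_ℓ)/γ_ℓ⌋ ≤ z − 1. Furthermore, if the inequality is tight, then either (i) ε_ℓ = 0 and θ_ℓ = Θ_ℓ for every ℓ ∈ [d], or (ii) z < 1/(1 − ∑_{ℓ∈[d]} Θ_ℓ/γ_ℓ). -/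
open scoped BigOperators

/-- **Lemma.** Let `d ∈ ℕ` and `Θ, γ ∈ ℝ^d` with strictly positive entries be such that
`∑ ℓ, Θ ℓ / γ ℓ < 1`.  Then for all `θ, ε ∈ ℝ^d` with nonnegative entries, `θ ℓ ≤ Θ ℓ`
for every `ℓ`, and every positive integer `z`, we have
`∑ ℓ, ⌊(θ ℓ * z - ε ℓ) / γ ℓ⌋ ≤ z - 1`; moreover if the inequality is tight then
either `ε ℓ = 0` and `θ ℓ = Θ ℓ` for every `ℓ`, or `z < 1 / (1 - ∑ ℓ, Θ ℓ / γ ℓ)`. -/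
theorem floor_sum_bound (d : ℕ) (hd : 0 < d) (Θ γ : Fin d → ℝ)
    (hΘ : ∀ ℓ, 0 < Θ ℓ) (hγ : ∀ ℓ, 0 < γ ℓ)
    (hsum : ∑ ℓ, Θ ℓ / γ ℓ < 1)
    (θ ε : Fin d → ℝ) (hθ0 : ∀ ℓ, 0 ≤ θ ℓ) (hε0 : ∀ ℓ, 0 ≤ ε ℓ)
    (hθΘ : ∀ ℓ, θ ℓ ≤ Θ ℓ) (z : ℕ) (hz : 0 < z) :
    (∑ ℓ, ⌊(θ ℓ * (z : ℝ) - ε ℓ) / γ ℓ⌋ ≤ (z : ℤ) - 1) ∧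
    (∑ ℓ, ⌊(θ ℓ * (z : ℝ) - ε ℓ) / γ ℓ⌋ = (z : ℤ) - 1 →
      (∀ ℓ, ε ℓ = 0 ∧ θ ℓ = Θ ℓ) ∨ (z : ℝ) < 1 / (1 - ∑ ℓ, Θ ℓ / γ ℓ)) := by
  have hzR : (0 : ℝ) < z := by exact_mod_cast hz
  have hle : ∀ ℓ, (θ ℓ * (z : ℝ) - ε ℓ) / γ ℓ ≤ Θ ℓ * z / γ ℓ := by
    intro ℓ
    have : θ ℓ * (z : ℝ) - ε ℓ ≤ Θ ℓ * z := by nlinarith [hε0 ℓ, hθΘ ℓ, hzR]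
    exact div_le_div_of_nonneg_right this (hγ ℓ).le
  have hfloor_le : ∀ ℓ, ((⌊(θ ℓ * (z : ℝ) - ε ℓ) / γ ℓ⌋ : ℝ)) ≤ Θ ℓ * z / γ ℓ :=
    fun ℓ => (Int.floor_le _).trans (hle ℓ)
  have hsum_eq : ∑ ℓ, Θ ℓ * (z : ℝ) / γ ℓ = (z : ℝ) * ∑ ℓ, Θ ℓ / γ ℓ := by
    rw [Finset.mul_sum]; congr 1; ext ℓ; ring
  have hS : ∑ ℓ, ((⌊(θ ℓ * (z : ℝ) - ε ℓ) / γ ℓ⌋ : ℝ)) ≤ (z : ℝ) * ∑ ℓ, Θ ℓ / γ ℓ := by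
    rw [← hsum_eq]; exact Finset.sum_le_sum fun ℓ _ => hfloor_le ℓ
  have hlt : ((∑ ℓ, ⌊(θ ℓ * (z : ℝ) - ε ℓ) / γ ℓ⌋ : ℤ) : ℝ) < (z : ℝ) := by
    push_cast
    calc ∑ ℓ, ((⌊(θ ℓ * (z : ℝ) - ε ℓ) / γ ℓ⌋ : ℝ)) ≤ (z : ℝ) * ∑ ℓ, Θ ℓ / γ ℓ := hS
    _ < (z : ℝ) * 1 := by exact mul_lt_mul_of_pos_left hsum hzR
    _ = z := mul_one _
  have h1 : ∑ ℓ, ⌊(θ ℓ * (z : ℝ) - ε ℓ) / γ ℓ⌋ ≤ (z : ℤ) - 1 := by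
    have : (∑ ℓ, ⌊(θ ℓ * (z : ℝ) - ε ℓ) / γ ℓ⌋ : ℤ) < (z : ℤ) := by exact_mod_cast hlt
    omega
  refine ⟨h1, fun heq => ?_⟩
  by_cases hcase : ∀ ℓ, ε ℓ = 0 ∧ θ ℓ = Θ ℓ
  · exact Or.inl hcase
  · right
    push_neg at hcase
    obtain ⟨ℓ₀, hℓ₀⟩ := hcase
    have hnum : θ ℓ₀ * (z : ℝ) - ε ℓ₀ < Θ ℓ₀ * z := by
      rcases (hε0 ℓ₀).eq_or_lt with h0 | h0
      · have hθ : θ ℓ₀ < Θ ℓ₀ := lt_of_le_of_ne (hθΘ ℓ₀) (hℓ₀ h0.symm)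
        nlinarith
      · nlinarith [mul_le_mul_of_nonneg_right (hθΘ ℓ₀) hzR.le]
    have hstrict : (θ ℓ₀ * (z : ℝ) - ε ℓ₀) / γ ℓ₀ < Θ ℓ₀ * z / γ ℓ₀ :=
      div_lt_div_of_pos_right hnum (hγ ℓ₀)
    have hsumlt : ∑ ℓ, (θ ℓ * (z : ℝ) - ε ℓ) / γ ℓ < (z : ℝ) * ∑ ℓ, Θ ℓ / γ ℓ := by
      rw [← hsum_eq]
      exact Finset.sum_lt_sum (fun ℓ _ => hle ℓ) ⟨ℓ₀, Finset.mem_univ _, hstrict⟩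
    have hfl : ((z : ℝ) - 1) ≤ ∑ ℓ, (θ ℓ * (z : ℝ) - ε ℓ) / γ ℓ := by
      have := Finset.sum_le_sum (fun ℓ (_ : ℓ ∈ Finset.univ) => Int.floor_le ((θ ℓ * (z : ℝ) - ε ℓ) / γ ℓ))
      have hc : ((∑ ℓ, ⌊(θ ℓ * (z : ℝ) - ε ℓ) / γ ℓ⌋ : ℤ) : ℝ) = (z : ℝ) - 1 := by
        exact_mod_cast congrArg (fun x : ℤ => (x : ℝ)) heq
      push_cast at hc this ⊢
      linarith
    have hfin : (z : ℝ) - 1 < (z : ℝ) * ∑ ℓ, Θ ℓ / γ ℓ := lt_of_le_of_lt hfl hsumlt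
    have hpos : 0 < 1 - ∑ ℓ, Θ ℓ / γ ℓ := by linarith
    rw [lt_div_iff₀ hpos]
    nlinarith
end

section
/- Let I=(A,A',R,G,ω,c) be an instance of MCRA with d dimensions, let 𝓕 ⊆ 𝓔 be a finite set, let ψ ∈ {0,1}, and let α ∈ ℕ₀^d and δ,Δ ∈ ℕ₀ be such that 𝟙_{ψ=1}/2 + ∑_{ℓ∈[d]} 1/(α_ℓ+1) + ω*/(δ+1) ≤ 1 and either (Δ ≥ 2 and ψ = 1) or (the previous inequality holds strictly and Δ ≥ 1/(1 − (𝟙_{ψ=1}/2 + ∑_{ℓ∈[d]} 1/(α_ℓ+1) + ω*/(δ+1))) − 1). Let Ã ⊆ {a ∈ A(𝓕) : |𝓕(a)| ≥ 2}, with Ã = ∅ if ψ = 0; let G̃_ℓ = {i ∈ [k_ℓ] : |𝓕(ℓ,i)| ≥ α_ℓ+1} for each ℓ ∈ [d]; let R̃ = {r ∈ R : ∑_{(a,q)∈𝓕(r)} q(r) ≥ δ+1}; and let χ = 1 if |A(𝓕)∖Ã| ≥ Δ+1 and χ = 0 otherwise. Then |Ã| + ∑_{ℓ∈[d]} |G̃_ℓ|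 + |R̃| + χ ≤ |𝓕|. Furthermore, if the inequality is tight, then: (i) if ψ = 1 then Ã = A(𝓕); (ii) for every ℓ ∈ [d], G̃_ℓ = G_ℓ(𝓕) and every a ∈ A(𝓕) belongs to G_{ℓ,i} for some i ∈ G_ℓ(𝓕); and (iii) R̃ = R(𝓕) and ∑_{r∈R(𝓕)} q(r) = ω* for every (a,q) ∈ 𝓕. -/
open scoped Classical BigOperators

noncomputable section

/-- An instance of the multidimensional capacitated resource allocation problem (MCRA)
with `d` dimensions. -/
structure MCRA (d : ℕ) where
  A : Type
  R : Type
  [fintypeA : Fintype A]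
  [fintypeR : Fintype R]
  [decEqA : DecidableEq A]
  [decEqR : DecidableEq R]
  /-- The binding agents `A' ⊆ A`. -/
  bind : Finset A
  /-- Number of groups in each dimension. -/
  k : Fin d → ℕ
  /-- The groups in each dimension. -/
  G : (ℓ : Fin d) → Fin (k ℓ) → Finset A
  G_disjoint : ∀ ℓ i j, i ≠ j → Disjoint (G ℓ i) (G ℓ j)
  /-- The demand of each agent. -/
  dem : A → ℕ
  dem_pos : ∀ a, 0 < dem a
  /-- The capacity of each resource. -/
  cap : R → ℕ
  cap_pos : ∀ r, 0 < cap r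

attribute [instance] MCRA.fintypeA MCRA.fintypeR MCRA.decEqA MCRA.decEqR

namespace MCRA

variable {d : ℕ} (I : MCRA d)

/-- The set `𝒯_a` of `ω_a`-bundles of agent `a`. -/
def bundles (a : I.A) : Finset (I.R → ℕ) :=
  (Fintype.piFinset fun _ : I.R => Finset.range (I.dem a + 1)).filter
    fun q => ∑ r, q r = I.dem a

/-- `ω* = max_{a ∈ A} ω_a`. -/
def demMax : ℕ := Finset.univ.sup I.dem

/-- `𝓕(a)`: the hyperedges of `𝓕` incident to agent `a`. -/
def Fagent (F : Finset (I.A × (I.R → ℕ))) (a : I.A) : Finset (I.A × (I.R → ℕ)) :=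
  F.filter fun e => e.1 = a

/-- `𝓕(ℓ,i)`: the hyperedges of `𝓕` incident to group `G_{ℓ,i}`. -/
def Fgroup (F : Finset (I.A × (I.R → ℕ))) (ℓ : Fin d) (i : Fin (I.k ℓ)) :
    Finset (I.A × (I.R → ℕ)) :=
  F.filter fun e => e.1 ∈ I.G ℓ i

/-- `𝓕(r)`: the hyperedges of `𝓕` incident to resource `r`. -/
def Fres (F : Finset (I.A × (I.R → ℕ))) (r : I.R) : Finset (I.A × (I.R → ℕ)) :=
  F.filter fun e => 1 ≤ e.2 r

/-- `A(𝓕)`: the agents with at least one incident hyperedge. -/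
def Aof (F : Finset (I.A × (I.R → ℕ))) : Finset I.A := F.image Prod.fst

/-- `G_ℓ(𝓕)`: the groups of dimension `ℓ` with at least one incident hyperedge. -/
def Gof (F : Finset (I.A × (I.R → ℕ))) (ℓ : Fin d) : Finset (Fin (I.k ℓ)) :=
  Finset.univ.filter fun i => (I.Fgroup F ℓ i).Nonempty

/-- `R(𝓕)`: the resources with at least one incident hyperedge. -/
def Rof (F : Finset (I.A × (I.R → ℕ))) : Finset I.R :=
  Finset.univ.filter fun r => (I.Fres F r).Nonempty

end MCRA

set_option maxHeartbeats 1600000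

/-- **Lemma (the algorithm terminates).** For an MCRA instance, a finite `𝓕 ⊆ 𝓔`,
`ψ ∈ {0,1}`, and deviations `α, δ, Δ` satisfying the conditions of the rounding theorem,
with `Ã, G̃, R̃, χ` defined as in the iterative rounding algorithm, we have
`|Ã| + ∑ ℓ, |G̃_ℓ| + |R̃| + χ ≤ |𝓕|`; moreover, if the inequality is tight then the
structural properties (i)–(iii) hold. -/
theorem algorithm_terminates {d : ℕ} (I : MCRA d)
    (F : Finset (I.A × (I.R → ℕ))) (hFE : ∀ e ∈ F, e.2 ∈ I.bundles e.1)
    (ψ : ℕ) (hψ01 : ψ = 0 ∨ ψ = 1)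
    (α : Fin d → ℕ) (δ Δ : ℕ)
    (hineq : (if ψ = 1 then (1 : ℝ) / 2 else 0) + ∑ ℓ, (1 : ℝ) / (α ℓ + 1)
      + (I.demMax : ℝ) / (δ + 1) ≤ 1)
    (hΔ : (2 ≤ Δ ∧ ψ = 1) ∨
      ((if ψ = 1 then (1 : ℝ) / 2 else 0) + ∑ ℓ, (1 : ℝ) / (α ℓ + 1)
          + (I.demMax : ℝ) / (δ + 1) < 1 ∧
        1 / (1 - ((if ψ = 1 then (1 : ℝ) / 2 else 0) + ∑ ℓ, (1 : ℝ) / (α ℓ + 1)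
          + (I.demMax : ℝ) / (δ + 1))) - 1 ≤ (Δ : ℝ)))
    (Atil : Finset I.A)
    (hAtil : Atil ⊆ (I.Aof F).filter fun a => 2 ≤ (I.Fagent F a).card)
    (hAtil0 : ψ = 0 → Atil = ∅)
    (Gtil : (ℓ : Fin d) → Finset (Fin (I.k ℓ)))
    (hGtil : ∀ ℓ, Gtil ℓ = Finset.univ.filter fun i => α ℓ + 1 ≤ (I.Fgroup F ℓ i).card)
    (Rtil : Finset I.R)
    (hRtil : Rtil = Finset.univ.filter fun r => δ + 1 ≤ ∑ e ∈ I.Fres F r, e.2 r)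
    (χ : ℕ)
    (hχ : χ = if Δ + 1 ≤ (I.Aof F \ Atil).card then 1 else 0) :
    Atil.card + ∑ ℓ, (Gtil ℓ).card + Rtil.card + χ ≤ F.card ∧
    (Atil.card + ∑ ℓ, (Gtil ℓ).card + Rtil.card + χ = F.card →
      (ψ = 1 → Atil = I.Aof F) ∧
      (∀ ℓ, Gtil ℓ = I.Gof F ℓ ∧ ∀ a ∈ I.Aof F, ∃ i ∈ I.Gof F ℓ, a ∈ I.G ℓ i) ∧
      (Rtil = I.Rof F ∧ ∀ e ∈ F, ∑ r ∈ I.Rof F, e.2 r = I.demMax)) := by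
  classical
  -- abbreviations
  set t : ℝ := if ψ = 1 then (1 : ℝ) / 2 else 0 with ht
  have ht0 : 0 ≤ t := by rw [ht]; split <;> norm_num
  set σ : ℝ := t + ∑ ℓ, (1 : ℝ) / (α ℓ + 1) + (I.demMax : ℝ) / (δ + 1) with hσ
  set n := F.card with hn
  set N' : ℕ := (F.filter fun e => ¬ e.1 ∈ Atil).card with hN'def
  set M : Fin d → ℕ := fun ℓ => ∑ i ∈ Gtil ℓ, (I.Fgroup F ℓ i).card with hMdef
  set P : ℕ := ∑ e ∈ F, ∑ r ∈ Rtil, e.2 r with hPdef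
  clear_value t σ n N' M P
  have hα : ∀ ℓ : Fin d, (0:ℝ) < (α ℓ : ℝ) + 1 := fun ℓ => by positivity
  have hδpos : (0:ℝ) < (δ:ℝ) + 1 := by positivity
  -- agent-side counting
  have hNsplit : (F.filter fun e => e.1 ∈ Atil).card + N' = n := by
    rw [hN'def, hn]
    exact Finset.card_filter_add_card_filter_not _
  have hbiA : F.filter (fun e => e.1 ∈ Atil) = Atil.biUnion (fun a => I.Fagent F a) := by
    ext e
    simp only [Finset.mem_filter, Finset.mem_biUnion, MCRA.Fagent]
    constructor
    · rintro ⟨he, ha⟩; exact ⟨e.1, ha, he, rfl⟩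
    · rintro ⟨a, ha, he, hea⟩
      exact ⟨he, hea ▸ ha⟩
  have hA2 : 2 * Atil.card ≤ (F.filter fun e => e.1 ∈ Atil).card := by
    rw [hbiA, Finset.card_biUnion]
    · calc 2 * Atil.card = ∑ _a ∈ Atil, 2 := by
            rw [Finset.sum_const, smul_eq_mul, mul_comm]
        _ ≤ ∑ a ∈ Atil, (I.Fagent F a).card := by
            refine Finset.sum_le_sum fun a ha => ?_
            have := hAtil ha
            rw [Finset.mem_filter] at this
            exact this.2
    · intro a ha b hb hab
      rw [Function.onFun, Finset.disjoint_left]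
      intro e he1 he2
      rw [MCRA.Fagent, Finset.mem_filter] at he1 he2
      exact hab (he1.2 ▸ he2.2 ▸ rfl)
  have hAN : 2 * Atil.card + N' ≤ n := by omega
  have hN'n : N' ≤ n := by omega
  have hχN' : Δ + 1 ≤ (I.Aof F \ Atil).card → Δ + 1 ≤ N' := by
    intro hc
    have hsub : (I.Aof F \ Atil) ⊆ (F.filter fun e => ¬ e.1 ∈ Atil).image Prod.fst := by
      intro a ha
      rw [Finset.mem_sdiff] at ha
      obtain ⟨haA, haN⟩ := ha
      rw [MCRA.Aof, Finset.mem_image] at haA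
      obtain ⟨e, he, rfl⟩ := haA
      exact Finset.mem_image.2 ⟨e, Finset.mem_filter.2 ⟨he, haN⟩, rfl⟩
    calc Δ + 1 ≤ (I.Aof F \ Atil).card := hc
      _ ≤ ((F.filter fun e => ¬ e.1 ∈ Atil).image Prod.fst).card := Finset.card_le_card hsub
      _ ≤ N' := hN'def ▸ Finset.card_image_le
  -- group-side counting
  have hGcard : ∀ ℓ, ∀ i ∈ Gtil ℓ, α ℓ + 1 ≤ (I.Fgroup F ℓ i).card := by
    intro ℓ i hi
    rw [hGtil ℓ, Finset.mem_filter] at hi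
    exact hi.2
  have hM' : ∀ ℓ, M ℓ = ∑ i ∈ Gtil ℓ, (I.Fgroup F ℓ i).card := fun ℓ => congrFun hMdef ℓ
  have hMle : ∀ ℓ, (Gtil ℓ).card * (α ℓ + 1) ≤ M ℓ := by
    intro ℓ
    have := Finset.card_nsmul_le_sum (Gtil ℓ) (fun i => (I.Fgroup F ℓ i).card) (α ℓ + 1)
      (hGcard ℓ)
    rw [hM' ℓ]
    simpa [smul_eq_mul] using this
  have hMfil : ∀ ℓ, M ℓ = (F.filter fun e => ∃ i ∈ Gtil ℓ, e.1 ∈ I.G ℓ i).card := by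
    intro ℓ
    have hU : F.filter (fun e => ∃ i ∈ Gtil ℓ, e.1 ∈ I.G ℓ i)
        = (Gtil ℓ).biUnion (fun i => I.Fgroup F ℓ i) := by
      ext e
      simp only [Finset.mem_filter, Finset.mem_biUnion, MCRA.Fgroup]
      constructor
      · rintro ⟨he, i, hi, hg⟩; exact ⟨i, hi, he, hg⟩
      · rintro ⟨i, hi, he, hg⟩
        exact ⟨he, i, hi, hg⟩
    rw [hM' ℓ, hU, Finset.card_biUnion]
    intro i hi j hj hij
    rw [Function.onFun, Finset.disjoint_left]
    intro e he1 he2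
    rw [MCRA.Fgroup, Finset.mem_filter] at he1 he2
    exact (Finset.disjoint_left.1 (I.G_disjoint ℓ i j hij)) he1.2 he2.2
  have hMn : ∀ ℓ, M ℓ ≤ n := by
    intro ℓ
    rw [hMfil ℓ, hn]
    exact Finset.card_filter_le _ _
  -- resource-side counting
  have hFsum : ∀ e ∈ F, ∑ r, e.2 r = I.dem e.1 := by
    intro e he
    have := hFE e he
    rw [MCRA.bundles, Finset.mem_filter] at this
    exact this.2
  have hdemle : ∀ a : I.A, I.dem a ≤ I.demMax := fun a => Finset.le_sup (Finset.mem_univ a)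
  have hRsum : ∀ r ∈ Rtil, δ + 1 ≤ ∑ e ∈ F, e.2 r := by
    intro r hr
    rw [hRtil, Finset.mem_filter] at hr
    calc δ + 1 ≤ ∑ e ∈ I.Fres F r, e.2 r := hr.2
      _ = ∑ e ∈ F, e.2 r := by
          rw [MCRA.Fres]
          exact Finset.sum_filter_of_ne (fun e _ h0 => Nat.one_le_iff_ne_zero.2 h0)
  have hPge : Rtil.card * (δ + 1) ≤ P := by
    rw [hPdef, Finset.sum_comm]
    have := Finset.card_nsmul_le_sum Rtil (fun r => ∑ e ∈ F, e.2 r) (δ + 1) hRsum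
    simpa [smul_eq_mul] using this
  have hPinner : ∀ e ∈ F, ∑ r ∈ Rtil, e.2 r ≤ I.demMax := by
    intro e he
    calc ∑ r ∈ Rtil, e.2 r ≤ ∑ r, e.2 r :=
          Finset.sum_le_sum_of_subset (Finset.subset_univ Rtil)
      _ = I.dem e.1 := hFsum e he
      _ ≤ I.demMax := hdemle e.1
  have hPle : P ≤ n * I.demMax := by
    rw [hPdef, hn]
    have := Finset.sum_le_card_nsmul F (fun e => ∑ r ∈ Rtil, e.2 r) I.demMax hPinner
    simpa [smul_eq_mul] using this
  -- real slack quantities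
  set D1 : ℝ := (N' : ℝ) * t with hD1def
  set D2 : ℝ := ∑ ℓ, ((n : ℝ) - M ℓ) / (α ℓ + 1) with hD2def
  set D3 : ℝ := ((n : ℝ) * I.demMax - P) / (δ + 1) with hD3def
  clear_value D1 D2 D3
  have hD1nn : 0 ≤ D1 := hD1def ▸ mul_nonneg (Nat.cast_nonneg _) ht0
  have hD2term : ∀ ℓ : Fin d, (0:ℝ) ≤ ((n : ℝ) - M ℓ) / (α ℓ + 1) := by
    intro ℓ
    apply div_nonneg _ (hα ℓ).le
    have := hMn ℓ
    have : (M ℓ : ℝ) ≤ n := by exact_mod_cast this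
    linarith
  have hD2nn : 0 ≤ D2 := hD2def ▸ Finset.sum_nonneg fun ℓ _ => hD2term ℓ
  have hD3nn : 0 ≤ D3 := by
    rw [hD3def]
    apply div_nonneg _ hδpos.le
    have : (P : ℝ) ≤ (n : ℝ) * I.demMax := by exact_mod_cast hPle
    linarith
  -- the key inequality
  have hKEY : (Atil.card : ℝ) + ∑ ℓ, ((Gtil ℓ).card : ℝ) + Rtil.card + (D1 + D2 + D3)
      ≤ (n : ℝ) * σ := by
    have hA : (Atil.card : ℝ) + D1 ≤ (n : ℝ) * t := by
      rcases hψ01 with h0 | h1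
      · have hA0 : Atil = ∅ := hAtil0 h0
        have ht0' : t = 0 := by rw [ht]; simp [h0]
        simp [hA0, hD1def, ht0']
      · have ht12 : t = 1 / 2 := by rw [ht]; simp [h1]
        have hcast : 2 * (Atil.card : ℝ) + N' ≤ n := by exact_mod_cast hAN
        rw [hD1def, ht12]
        linarith
    have hB : ∀ ℓ : Fin d, ((Gtil ℓ).card : ℝ) + ((n : ℝ) - M ℓ) / (α ℓ + 1)
        ≤ (n : ℝ) * (1 / (α ℓ + 1)) := by
      intro ℓ
      have h1 : ((Gtil ℓ).card : ℝ) * ((α ℓ : ℝ) + 1) ≤ M ℓ := by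
        exact_mod_cast hMle ℓ
      have h2 : (M ℓ : ℝ) / ((α ℓ : ℝ) + 1) + ((n : ℝ) - M ℓ) / ((α ℓ : ℝ) + 1)
          = (n : ℝ) / ((α ℓ : ℝ) + 1) := by
        rw [← add_div]; ring_nf
      have h3 : ((Gtil ℓ).card : ℝ) ≤ (M ℓ : ℝ) / ((α ℓ : ℝ) + 1) := by
        rw [le_div_iff₀ (hα ℓ)]; exact h1
      rw [mul_one_div]
      linarith
    have hBsum : ∑ ℓ, ((Gtil ℓ).card : ℝ) + D2 ≤ ∑ ℓ, (n : ℝ) * (1 / (α ℓ + 1)) := by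
      rw [hD2def, ← Finset.sum_add_distrib]
      exact Finset.sum_le_sum fun ℓ _ => hB ℓ
    have hC : (Rtil.card : ℝ) + D3 ≤ (n : ℝ) * ((I.demMax : ℝ) / (δ + 1)) := by
      have h1 : (Rtil.card : ℝ) * ((δ : ℝ) + 1) ≤ P := by exact_mod_cast hPge
      have h2 : (P : ℝ) / ((δ : ℝ) + 1) + ((n : ℝ) * I.demMax - P) / ((δ : ℝ) + 1)
          = (n : ℝ) * I.demMax / ((δ : ℝ) + 1) := by
        rw [← add_div]; ring_nf
      have h3 : (Rtil.card : ℝ) ≤ (P : ℝ) / ((δ : ℝ) + 1) := by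
        rw [le_div_iff₀ hδpos]; exact h1
      rw [hD3def, ← mul_div_assoc]
      linarith
    have hexp : (n : ℝ) * σ
        = (n : ℝ) * t + ∑ ℓ, (n : ℝ) * (1 / (α ℓ + 1)) + (n : ℝ) * ((I.demMax : ℝ) / (δ + 1)) := by
      rw [hσ, mul_add, mul_add, Finset.mul_sum]
    rw [hexp]
    linarith
  have hσ1 : σ ≤ 1 := hineq
  have hnσ : (n : ℝ) * σ ≤ n := by
    calc (n : ℝ) * σ ≤ (n : ℝ) * 1 := by
          exact mul_le_mul_of_nonneg_left hσ1 (Nat.cast_nonneg n)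
      _ = n := mul_one _
  -- main inequality
  have hmain : Atil.card + ∑ ℓ, (Gtil ℓ).card + Rtil.card + χ ≤ n := by
    rw [hχ]
    split_ifs with hcond
    · -- χ = 1
      have hΔN' : Δ + 1 ≤ N' := hχN' hcond
      rcases hΔ with ⟨h2Δ, hψ1⟩ | ⟨hlt, hge⟩
      · have ht12 : t = 1 / 2 := by rw [ht]; simp [hψ1]
        have h3 : (3 : ℝ) ≤ N' := by exact_mod_cast (by omega : 3 ≤ N')
        have hD1big : (3 : ℝ) / 2 ≤ D1 := by rw [hD1def, ht12]; linarith
        have hstrict : (Atil.card : ℝ) + ∑ ℓ, ((Gtil ℓ).card : ℝ) + Rtil.card + 1 < n := by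
          linarith
        have : (↑(Atil.card + ∑ ℓ, (Gtil ℓ).card + Rtil.card + 1) : ℝ) < n := by
          push_cast; linarith
        exact_mod_cast this.le
      · have hσlt : σ < 1 := hlt
        have hΔσ : 1 ≤ ((Δ : ℝ) + 1) * (1 - σ) := by
          have h2 : (1 : ℝ) / (1 - σ) ≤ (Δ : ℝ) + 1 := by linarith
          rw [div_le_iff₀ (by linarith : (0:ℝ) < 1 - σ)] at h2
          linarith [mul_comm ((Δ:ℝ) + 1) (1 - σ)]
        have hΔn : ((Δ : ℝ) + 1) ≤ n := by
          exact_mod_cast (by omega : Δ + 1 ≤ n)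
        have hprod : ((Δ : ℝ) + 1) * (1 - σ) ≤ (n : ℝ) * (1 - σ) :=
          mul_le_mul_of_nonneg_right hΔn (by linarith)
        have : (↑(Atil.card + ∑ ℓ, (Gtil ℓ).card + Rtil.card + 1) : ℝ) ≤ n := by
          push_cast
          nlinarith
        exact_mod_cast this
    · -- χ = 0
      have : (↑(Atil.card + ∑ ℓ, (Gtil ℓ).card + Rtil.card + 0) : ℝ) ≤ n := by
        push_cast
        linarith
      exact_mod_cast this
  refine ⟨hmain, ?_⟩
  -- tightness analysis
  intro heq
  have hD0 : D1 = 0 ∧ D2 = 0 ∧ D3 = 0 := by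
    have hsum0 : D1 + D2 + D3 ≤ 0 := by
      rw [hχ] at heq
      split_ifs at heq with hcond
      · have hΔN' : Δ + 1 ≤ N' := hχN' hcond
        have heqR : (Atil.card : ℝ) + ∑ ℓ, ((Gtil ℓ).card : ℝ) + Rtil.card + 1 = n := by
          have := congrArg (Nat.cast (R := ℝ)) heq
          push_cast at this
          linarith
        rcases hΔ with ⟨h2Δ, hψ1⟩ | ⟨hlt, hge⟩
        · exfalso
          have ht12 : t = 1 / 2 := by rw [ht]; simp [hψ1]
          have h3 : (3 : ℝ) ≤ N' := by exact_mod_cast (by omega : 3 ≤ N')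
          have hD1big : (3 : ℝ) / 2 ≤ D1 := by rw [hD1def, ht12]; linarith
          linarith
        · have hσlt : σ < 1 := hlt
          have hΔσ : 1 ≤ ((Δ : ℝ) + 1) * (1 - σ) := by
            have h2 : (1 : ℝ) / (1 - σ) ≤ (Δ : ℝ) + 1 := by linarith
            rw [div_le_iff₀ (by linarith : (0:ℝ) < 1 - σ)] at h2
            linarith [mul_comm ((Δ:ℝ) + 1) (1 - σ)]
          have hΔn : ((Δ : ℝ) + 1) ≤ n := by
            exact_mod_cast (by omega : Δ + 1 ≤ n)
          have hprod : ((Δ : ℝ) + 1) * (1 - σ) ≤ (n : ℝ) * (1 - σ) :=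
            mul_le_mul_of_nonneg_right hΔn (by linarith)
          nlinarith
      · have heqR : (Atil.card : ℝ) + ∑ ℓ, ((Gtil ℓ).card : ℝ) + Rtil.card = n := by
          have := congrArg (Nat.cast (R := ℝ)) heq
          push_cast at this
          linarith
        linarith
    exact ⟨by linarith, by linarith, by linarith⟩
  obtain ⟨hD1z, hD2z, hD3z⟩ := hD0
  -- extract equalities
  have hN'0 : ψ = 1 → N' = 0 := by
    intro hψ1
    have ht12 : t = 1 / 2 := by rw [ht]; simp [hψ1]
    rw [hD1def, ht12] at hD1z
    have : (N' : ℝ) = 0 := by linarith [mul_eq_zero.1 hD1z]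
    exact_mod_cast this
  have hMeq : ∀ ℓ, M ℓ = n := by
    intro ℓ
    rw [hD2def] at hD2z
    have := (Finset.sum_eq_zero_iff_of_nonneg (fun ℓ _ => hD2term ℓ)).1 hD2z ℓ
      (Finset.mem_univ ℓ)
    rw [div_eq_zero_iff] at this
    rcases this with h | h
    · have : (M ℓ : ℝ) = n := by linarith
      exact_mod_cast this
    · exact absurd h (hα ℓ).ne'
  have hPeq : P = n * I.demMax := by
    rw [hD3def, div_eq_zero_iff] at hD3z
    rcases hD3z with h | h
    · have : (P : ℝ) = (n : ℝ) * I.demMax := by linarith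
      exact_mod_cast this
    · exact absurd h hδpos.ne'
  -- claim (i)
  have claimI : ψ = 1 → Atil = I.Aof F := by
    intro hψ1
    have hfil : F.filter (fun e => ¬ e.1 ∈ Atil) = ∅ :=
      Finset.card_eq_zero.1 (hN'def ▸ hN'0 hψ1)
    apply Finset.Subset.antisymm
    · exact hAtil.trans (Finset.filter_subset _ _)
    · intro a ha
      rw [MCRA.Aof, Finset.mem_image] at ha
      obtain ⟨e, he, rfl⟩ := ha
      by_contra hnot
      have : e ∈ F.filter (fun e => ¬ e.1 ∈ Atil) := Finset.mem_filter.2 ⟨he, hnot⟩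
      rw [hfil] at this
      exact absurd this (Finset.notMem_empty e)
  -- claim (ii)
  have claimII : ∀ ℓ, Gtil ℓ = I.Gof F ℓ ∧ ∀ a ∈ I.Aof F, ∃ i ∈ I.Gof F ℓ, a ∈ I.G ℓ i := by
    intro ℓ
    have hBeq : F.filter (fun e => ∃ i ∈ Gtil ℓ, e.1 ∈ I.G ℓ i) = F := by
      apply Finset.eq_of_subset_of_card_le (Finset.filter_subset _ _)
      rw [← hMfil ℓ, hMeq ℓ, hn]
    have hall : ∀ e ∈ F, ∃ i ∈ Gtil ℓ, e.1 ∈ I.G ℓ i := by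
      intro e he
      rw [← hBeq, Finset.mem_filter] at he
      exact he.2
    have hGsub : Gtil ℓ ⊆ I.Gof F ℓ := by
      intro i hi
      have hc := hGcard ℓ i hi
      rw [MCRA.Gof, Finset.mem_filter]
      exact ⟨Finset.mem_univ i, Finset.card_pos.1 (by omega)⟩
    have hGG : Gtil ℓ = I.Gof F ℓ := by
      apply Finset.Subset.antisymm hGsub
      intro i hi
      rw [MCRA.Gof, Finset.mem_filter] at hi
      obtain ⟨e, he⟩ := hi.2
      rw [MCRA.Fgroup, Finset.mem_filter] at he
      obtain ⟨j, hj, hmem⟩ := hall e he.1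
      have hij : i = j := by
        by_contra hne
        exact (Finset.disjoint_left.1 (I.G_disjoint ℓ i j hne)) he.2 hmem
      rw [hij]; exact hj
    refine ⟨hGG, ?_⟩
    intro a ha
    rw [MCRA.Aof, Finset.mem_image] at ha
    obtain ⟨e, he, rfl⟩ := ha
    obtain ⟨i, hi, hmem⟩ := hall e he
    exact ⟨i, hGG ▸ hi, hmem⟩
  -- claim (iii)
  have hinner : ∀ e ∈ F, ∑ r ∈ Rtil, e.2 r = I.demMax := by
    have hsum : ∑ e ∈ F, (∑ r ∈ Rtil, e.2 r) = ∑ e ∈ F, I.demMax := by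
      rw [Finset.sum_const, smul_eq_mul, ← hn, ← hPdef, hPeq]
    exact fun e he => (Finset.sum_eq_sum_iff_of_le hPinner).1 hsum e he
  have hoff : ∀ e ∈ F, ∀ r, r ∉ Rtil → e.2 r = 0 := by
    intro e he r hr
    have h1 : ∑ r ∈ Finset.univ \ Rtil, e.2 r + ∑ r ∈ Rtil, e.2 r = ∑ r, e.2 r :=
      Finset.sum_sdiff (Finset.subset_univ Rtil)
    have h2 : ∑ r, e.2 r = I.dem e.1 := hFsum e he
    have h3 : I.dem e.1 ≤ I.demMax := hdemle e.1
    have h4 : ∑ r ∈ Rtil, e.2 r = I.demMax := hinner e he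
    have h5 : ∑ r ∈ Finset.univ \ Rtil, e.2 r = 0 := by omega
    exact Finset.sum_eq_zero_iff.1 h5 r (Finset.mem_sdiff.2 ⟨Finset.mem_univ r, hr⟩)
  have hRR : Rtil = I.Rof F := by
    apply Finset.Subset.antisymm
    · intro r hr
      have hge := hRtil ▸ hr
      rw [Finset.mem_filter] at hge
      rw [MCRA.Rof, Finset.mem_filter]
      refine ⟨Finset.mem_univ r, ?_⟩
      by_contra hne
      rw [Finset.not_nonempty_iff_eq_empty] at hne
      rw [hne, Finset.sum_empty] at hge
      omega
    · intro r hr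
      rw [MCRA.Rof, Finset.mem_filter] at hr
      obtain ⟨e, he⟩ := hr.2
      rw [MCRA.Fres, Finset.mem_filter] at he
      by_contra hrn
      have := hoff e he.1 r hrn
      omega
  refine ⟨claimI, claimII, hRR, ?_⟩
  intro e he
  rw [← hRR]
  exact hinner e he
end
end

section
/- Let I=(A,A',R,G,ω,c) be an instance of MCRA with d dimensions, let 𝓕 ⊆ 𝓔 be a finite nonempty set, let x̃ : 𝓕 → (0,1), let u_a : 𝒯_a → ℝ≥0 be utility functions (write u(e) = u_a(q) for e = (a,q)), let Ã ⊆ A, G̃_ℓ ⊆ [k_ℓ] for each ℓ ∈ [d], R̃ ⊆ R, and χ ∈ {0,1}, and let ψ ∈ {0,1} be such that ψ = 1 or d ≥ 2. Suppose that: (i) if ψ = 1 then Ã = A(𝓕) and ∑_{e∈𝓕(a)} x̃(e) = 1 for every a ∈ Ã; (ii) for every ℓ ∈ [d], G̃_ℓ = G_ℓ(𝓕) and every a ∈ A(𝓕) belongs to G_{ℓ,i} for some i ∈ G_ℓ(𝓕); and (iii) R̃ = R(𝓕) and ∑_{r∈R(𝓕)} q(r) = ω* for every (a,q) ∈ 𝓕.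 Then the family of affine functionals on ℝ^𝓕 consisting of y ↦ ∑_{e∈𝓕(a)} y(e) − 1 for a ∈ Ã, y ↦ ∑_{e∈𝓕(ℓ,i)} u(e)·(y(e) − x̃(e)) for ℓ ∈ [d] and i ∈ G̃_ℓ, y ↦ ∑_{(a,q)∈𝓕(r)} q(r)·(y(a,q) − x̃(a,q)) for r ∈ R̃, and (if χ = 1) y ↦ ∑_{(a,q)∈𝓕} ω_a·(y(a,q) − x̃(a,q)), is not linearly independent. -/
open scoped Classical BigOperators

noncomputable section

namespace MCRA

variable {d : ℕ} (I : MCRA d)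

/-- The family of affine functionals on `ℝ^𝓕` from the linear program of the rounding
algorithm, each represented by the pair `(w, β)` of its linear part and constant term:
`y ↦ ∑_{e ∈ 𝓕(a)} y e − 1` for `a ∈ Ã`;
`y ↦ ∑_{e ∈ 𝓕(ℓ,i)} u e * (y e − x̃ e)` for `ℓ ∈ [d]` and `i ∈ G̃_ℓ`;
`y ↦ ∑_{(a,q) ∈ 𝓕(r)} q r * (y (a,q) − x̃ (a,q))` for `r ∈ R̃`; and (if `χ = 1`)
`y ↦ ∑_{(a,q) ∈ 𝓕} ω_a * (y (a,q) − x̃ (a,q))`. -/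
def affineFamily (F : Finset (I.A × (I.R → ℕ)))
    (xt : I.A × (I.R → ℕ) → ℝ) (u : I.A → (I.R → ℕ) → ℝ)
    (Atil : Finset I.A) (Gtil : (ℓ : Fin d) → Finset (Fin (I.k ℓ)))
    (Rtil : Finset I.R) (χ : ℕ) :
    (↥Atil ⊕ ((Σ ℓ : Fin d, ↥(Gtil ℓ)) ⊕ (↥Rtil ⊕ Fin χ))) → ((↥F → ℝ) × ℝ)
  | Sum.inl a =>
      (fun e => if (e : I.A × (I.R → ℕ)).1 = (a : I.A) then (1 : ℝ) else 0, -1)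
  | Sum.inr (Sum.inl p) =>
      (fun e => if (e : I.A × (I.R → ℕ)).1 ∈ I.G p.1 (p.2 : Fin (I.k p.1))
          then u (e : I.A × (I.R → ℕ)).1 (e : I.A × (I.R → ℕ)).2 else 0,
        -∑ e ∈ I.Fgroup F p.1 (p.2 : Fin (I.k p.1)), u e.1 e.2 * xt e)
  | Sum.inr (Sum.inr (Sum.inl r)) =>
      (fun e => ((e : I.A × (I.R → ℕ)).2 (r : I.R) : ℝ),
        -∑ e ∈ I.Fres F (r : I.R), (e.2 (r : I.R) : ℝ) * xt e)
  | Sum.inr (Sum.inr (Sum.inr _)) =>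
      (fun e => (I.dem (e : I.A × (I.R → ℕ)).1 : ℝ),
        -∑ e ∈ F, (I.dem e.1 : ℝ) * xt e)

end MCRA


section Helpers

variable {d : ℕ} (I : MCRA d)

lemma sum_fiber_agent (F : Finset (I.A × (I.R → ℕ))) (f : I.A × (I.R → ℕ) → ℝ) :
    ∑ a ∈ I.Aof F, ∑ e ∈ I.Fagent F a, f e = ∑ e ∈ F, f e :=
  Finset.sum_fiberwise_of_maps_to (fun e he => Finset.mem_image_of_mem _ he) f

lemma sum_indicator_group (ℓ : Fin d) (s : Finset (Fin (I.k ℓ))) (a : I.A)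
    (i₀ : Fin (I.k ℓ)) (hi₀ : i₀ ∈ s) (ha : a ∈ I.G ℓ i₀) (c : ℝ) :
    ∑ i ∈ s, (if a ∈ I.G ℓ i then c else 0) = c := by
  rw [Finset.sum_eq_single_of_mem i₀ hi₀]
  · exact if_pos ha
  · intro j hj hne
    exact if_neg fun hja => (Finset.disjoint_left.mp (I.G_disjoint ℓ j i₀ hne) hja) ha

lemma sum_fiber_group (F : Finset (I.A × (I.R → ℕ))) (ℓ : Fin d)
    (f : I.A × (I.R → ℕ) → ℝ)
    (hcov : ∀ e ∈ F, ∃ i ∈ I.Gof F ℓ, e.1 ∈ I.G ℓ i) :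
    ∑ i ∈ I.Gof F ℓ, ∑ e ∈ I.Fgroup F ℓ i, f e = ∑ e ∈ F, f e := by
  have h1 : ∀ i : Fin (I.k ℓ), ∑ e ∈ I.Fgroup F ℓ i, f e
      = ∑ e ∈ F, if e.1 ∈ I.G ℓ i then f e else 0 := by
    intro i; rw [MCRA.Fgroup, Finset.sum_filter]
  simp_rw [h1]
  rw [Finset.sum_comm]
  refine Finset.sum_congr rfl fun e he => ?_
  obtain ⟨i, hi, hgi⟩ := hcov e he
  exact sum_indicator_group I ℓ _ _ i hi hgi (f e)

lemma sum_Fres (F : Finset (I.A × (I.R → ℕ))) (r : I.R) (xt : I.A × (I.R → ℕ) → ℝ) :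
    ∑ e ∈ I.Fres F r, (e.2 r : ℝ) * xt e = ∑ e ∈ F, (e.2 r : ℝ) * xt e := by
  refine Finset.sum_filter_of_ne fun e he hne => ?_
  rcases Nat.eq_zero_or_pos (e.2 r) with h | h
  · simp [h] at hne
  · exact h

end Helpers

/-- **Claim (the equality constraints are not linearly independent).**
Under the structural properties (i)–(iii), the family of affine functionals of the
linear program is not linearly independent. -/
theorem constraints_not_linearIndependent {d : ℕ} (I : MCRA d)
    (F : Finset (I.A × (I.R → ℕ))) (hFE : ∀ e ∈ F, e.2 ∈ I.bundles e.1)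
    (hFne : F.Nonempty)
    (xt : I.A × (I.R → ℕ) → ℝ) (hxt : ∀ e ∈ F, 0 < xt e ∧ xt e < 1)
    (u : I.A → (I.R → ℕ) → ℝ) (hu : ∀ a, ∀ q ∈ I.bundles a, 0 ≤ u a q)
    (Atil : Finset I.A) (Gtil : (ℓ : Fin d) → Finset (Fin (I.k ℓ))) (Rtil : Finset I.R)
    (χ : ℕ) (hχ01 : χ = 0 ∨ χ = 1)
    (ψ : ℕ) (hψ01 : ψ = 0 ∨ ψ = 1) (hψd : ψ = 1 ∨ 2 ≤ d)
    (hi : ψ = 1 → Atil = I.Aof F ∧ ∀ a ∈ Atil, ∑ e ∈ I.Fagent F a, xt e = 1)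
    (hii : ∀ ℓ, Gtil ℓ = I.Gof F ℓ ∧ ∀ a ∈ I.Aof F, ∃ i ∈ I.Gof F ℓ, a ∈ I.G ℓ i)
    (hiii : Rtil = I.Rof F ∧ ∀ e ∈ F, ∑ r ∈ I.Rof F, e.2 r = I.demMax) :
    ¬ LinearIndependent ℝ (I.affineFamily F xt u Atil Gtil Rtil χ) := by
  classical
  obtain ⟨e₀, he₀⟩ := hFne
  have hA0 : e₀.1 ∈ I.Aof F := Finset.mem_image_of_mem _ he₀
  have hωpos : 0 < I.demMax :=
    lt_of_lt_of_le (I.dem_pos e₀.1) (Finset.le_sup (Finset.mem_univ e₀.1))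
  set v := I.affineFamily F xt u Atil Gtil Rtil χ with hv
  rw [Fintype.not_linearIndependent_iff]
  rcases hψd with hψ | hd
  · -- case ψ = 1 : agents vs resources
    obtain ⟨hAtil, hAsum⟩ := hi hψ
    have hRtil := hiii.1
    have hRsum : ∀ e ∈ F, (∑ r ∈ Rtil, (e.2 r : ℝ)) = (I.demMax : ℝ) := by
      intro e he
      rw [hRtil, ← Nat.cast_sum, hiii.2 e he]
    have hxtsum : ∑ e ∈ F, xt e = (Atil.card : ℝ) := by
      rw [← sum_fiber_agent I F xt, ← hAtil, Finset.sum_congr rfl hAsum]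
      simp
    refine ⟨Sum.elim (fun _ => (I.demMax : ℝ))
      (Sum.elim (fun _ => 0) (Sum.elim (fun _ => -1) (fun _ => 0))), ?_, ?_⟩
    · rw [Fintype.sum_sum_type, Fintype.sum_sum_type, Fintype.sum_sum_type]
      simp only [Sum.elim_inl, Sum.elim_inr, zero_smul, Finset.sum_const_zero,
        add_zero, zero_add]
      refine Prod.ext ?_ ?_
      · funext e
        simp only [Prod.fst_add, Prod.fst_sum, Prod.smul_fst, hv, MCRA.affineFamily,
          Pi.add_apply, Finset.sum_apply, Pi.smul_apply, smul_eq_mul,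
          Prod.fst_zero, Pi.zero_apply]
        rw [Finset.sum_coe_sort Atil
            (fun a => (I.demMax : ℝ) * if (e : I.A × (I.R → ℕ)).1 = a then 1 else 0),
          Finset.sum_coe_sort Rtil
            (fun r => (-1 : ℝ) * ((e : I.A × (I.R → ℕ)).2 r : ℝ)),
          ← Finset.mul_sum, ← Finset.mul_sum, Finset.sum_ite_eq, hRsum _ e.2]
        have heA : (e : I.A × (I.R → ℕ)).1 ∈ Atil := by
          rw [hAtil]; exact Finset.mem_image_of_mem _ e.2
        rw [if_pos heA]
        ring
      · simp only [Prod.snd_add, Prod.snd_sum, Prod.smul_snd, hv, MCRA.affineFamily,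
          smul_eq_mul, Prod.snd_zero]
        rw [Finset.sum_coe_sort Atil (fun _ => (I.demMax : ℝ) * (-1 : ℝ)),
          Finset.sum_coe_sort Rtil
            (fun r => (-1 : ℝ) * (-∑ e ∈ I.Fres F r, ((e.2 r : ℝ)) * xt e))]
        simp only [neg_mul, one_mul, neg_neg]
        have h2 : ∀ r ∈ Rtil, ∑ e ∈ I.Fres F r, ((e.2 r : ℝ)) * xt e
            = ∑ e ∈ F, ((e.2 r : ℝ)) * xt e := fun r _ => sum_Fres I F r xt
        rw [Finset.sum_congr rfl h2, Finset.sum_comm]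
        have h3 : ∀ e ∈ F, ∑ r ∈ Rtil, ((e.2 r : ℝ)) * xt e
            = (I.demMax : ℝ) * xt e := by
          intro e he
          rw [← Finset.sum_mul, hRsum e he]
        have h6 : ∑ x ∈ F, (I.demMax : ℝ) * xt x = (I.demMax : ℝ) * Atil.card := by
          rw [← Finset.mul_sum, hxtsum]
        rw [Finset.sum_congr rfl h3, h6]
        simp only [Finset.sum_const, nsmul_eq_mul, mul_neg, mul_one]
        ring
    · refine ⟨Sum.inl ⟨e₀.1, by rw [hAtil]; exact hA0⟩, ?_⟩
      simp only [Sum.elim_inl]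
      exact_mod_cast hωpos.ne'
  · -- case d ≥ 2 : two group dimensions
    set ℓ₀ : Fin d := ⟨0, by omega⟩ with hℓ₀
    set ℓ₁ : Fin d := ⟨1, by omega⟩ with hℓ₁
    have hℓne : ℓ₀ ≠ ℓ₁ := by simp [hℓ₀, hℓ₁, Fin.ext_iff]
    have hcov : ∀ ℓ : Fin d, ∀ e ∈ F, ∃ i ∈ I.Gof F ℓ, e.1 ∈ I.G ℓ i :=
      fun ℓ e he => (hii ℓ).2 e.1 (Finset.mem_image_of_mem _ he)
    set T : (↥F → ℝ) × ℝ :=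
      ((fun e => u (e : I.A × (I.R → ℕ)).1 (e : I.A × (I.R → ℕ)).2),
        -∑ e ∈ F, u e.1 e.2 * xt e) with hTdef
    have hT : ∀ ℓ : Fin d,
        ∑ i : ↥(Gtil ℓ), v (Sum.inr (Sum.inl ⟨ℓ, i⟩)) = T := by
      intro ℓ
      refine Prod.ext ?_ ?_
      · funext e
        simp only [Prod.fst_sum, Finset.sum_apply, hv, MCRA.affineFamily, hTdef]
        rw [Finset.sum_coe_sort (Gtil ℓ)
          (fun i => if (e : I.A × (I.R → ℕ)).1 ∈ I.G ℓ i
            then u (e : I.A × (I.R → ℕ)).1 (e : I.A × (I.R → ℕ)).2 else 0),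
          (hii ℓ).1]
        obtain ⟨i, hi, hgi⟩ := hcov ℓ e e.2
        exact sum_indicator_group I ℓ _ _ i hi hgi _
      · simp only [Prod.snd_sum, hv, MCRA.affineFamily, hTdef]
        rw [Finset.sum_coe_sort (Gtil ℓ)
          (fun i => -∑ e ∈ I.Fgroup F ℓ i, u e.1 e.2 * xt e), (hii ℓ).1,
          Finset.sum_neg_distrib, sum_fiber_group I F ℓ _ (hcov ℓ)]
    refine ⟨Sum.elim (fun _ => 0)
      (Sum.elim (fun p => if p.1 = ℓ₀ then (1 : ℝ) else if p.1 = ℓ₁ then -1 else 0)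
        (fun _ => 0)), ?_, ?_⟩
    · rw [Fintype.sum_sum_type, Fintype.sum_sum_type]
      simp only [Sum.elim_inl, Sum.elim_inr, zero_smul, Finset.sum_const_zero,
        add_zero, zero_add]
      rw [← Finset.univ_sigma_univ, Finset.sum_sigma]
      have h4 : ∀ ℓ : Fin d,
          ∑ i : ↥(Gtil ℓ),
            (if ℓ = ℓ₀ then (1 : ℝ) else if ℓ = ℓ₁ then -1 else 0)
              • v (Sum.inr (Sum.inl ⟨ℓ, i⟩))
          = (if ℓ = ℓ₀ then (1 : ℝ) else if ℓ = ℓ₁ then -1 else 0) • T := by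
        intro ℓ
        rw [← Finset.smul_sum, hT ℓ]
      rw [Finset.sum_congr rfl fun ℓ _ => h4 ℓ, ← Finset.sum_smul]
      have h5 : ∑ ℓ : Fin d, (if ℓ = ℓ₀ then (1 : ℝ) else if ℓ = ℓ₁ then -1 else 0)
          = 0 := by
        have : ∀ ℓ : Fin d, (if ℓ = ℓ₀ then (1 : ℝ) else if ℓ = ℓ₁ then -1 else 0)
            = (if ℓ = ℓ₀ then (1 : ℝ) else 0) + (if ℓ = ℓ₁ then -1 else 0) := by
          intro ℓ
          by_cases h0 : ℓ = ℓ₀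
          · subst h0; rw [if_neg hℓne]; simp
          · simp [h0]
        simp_rw [this]
        rw [Finset.sum_add_distrib, Finset.sum_ite_eq' Finset.univ ℓ₀ fun _ => (1:ℝ),
          Finset.sum_ite_eq' Finset.univ ℓ₁ fun _ => (-1:ℝ)]
        simp
      rw [h5, zero_smul]
    · obtain ⟨i₀, hi₀, hgi₀⟩ := (hii ℓ₀).2 e₀.1 hA0
      refine ⟨Sum.inr (Sum.inl ⟨ℓ₀, ⟨i₀, by rw [(hii ℓ₀).1]; exact hi₀⟩⟩), ?_⟩
      simp
end
end

section
/- Let I=(A,R,E,G,ω,c,u) be an instance of assignment-MCRA, let x^f be a fractional resource allocation for I, let 𝓕 = {(a,q) ∈ ℳ : 0 < x^f(a,q) < 1}, and let R̃ = {r ∈ R : ∑_{a∈A} ∑_{q∈𝒯_{a,E}} q(r)·x^f(a,q) = c(r)}. Let y : ℳ → {0,1} be a rounding of x^f. Then for every r ∈ R(𝓕): if r ∈ R̃, then ∑_{a∈A} ∑_{q∈𝒯_{a,E}} q(r)·y(a,q) − c(r) ≤ ∑_{(a,q)∈𝓕(r)} q(r) − 1; and if r ∉ R̃, then ∑_{a∈A}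 ∑_{q∈𝒯_{a,E}} q(r)·y(a,q) − c(r) ≤ ∑_{(a,q)∈𝓕(r)} q(r). -/
open scoped Classical BigOperators

noncomputable section

/-- An instance of the assignment-MCRA problem with `d` dimensions. -/
structure AMCRA (d : ℕ) where
  A : Type
  R : Type
  [fintypeA : Fintype A]
  [fintypeR : Fintype R]
  [decEqA : DecidableEq A]
  [decEqR : DecidableEq R]
  /-- Number of groups in each dimension. -/
  k : Fin d → ℕ
  /-- The groups in each dimension. -/
  G : (ℓ : Fin d) → Fin (k ℓ) → Finset A
  G_disjoint : ∀ ℓ i j, i ≠ j → Disjoint (G ℓ i) (G ℓ j)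
  /-- The demand of each agent. -/
  dem : A → ℕ
  dem_pos : ∀ a, 0 < dem a
  /-- The capacity of each resource. -/
  cap : R → ℕ
  cap_pos : ∀ r, 0 < cap r
  /-- The acceptable agent-resource pairs `E ⊆ A × R`. -/
  acc : Finset (A × R)
  /-- The utility function `u_a : 𝒯_a → ℝ≥0` of each agent. -/
  u : A → (R → ℕ) → ℝ
  u_nonneg : ∀ a q, 0 ≤ u a q

attribute [instance] AMCRA.fintypeA AMCRA.fintypeR AMCRA.decEqA AMCRA.decEqR

namespace AMCRA

variable {d : ℕ} (I : AMCRA d)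

/-- The set `𝒯_a` of `ω_a`-bundles of agent `a`. -/
def bundles (a : I.A) : Finset (I.R → ℕ) :=
  (Fintype.piFinset fun _ : I.R => Finset.range (I.dem a + 1)).filter
    fun q => ∑ r, q r = I.dem a

/-- The set `𝒯_{a,E}` of `ω_a`-bundles of agent `a` made of acceptable resources. -/
def bundlesE (a : I.A) : Finset (I.R → ℕ) :=
  (I.bundles a).filter fun q => ∀ r, 1 ≤ q r → (a, r) ∈ I.acc

/-- `ω* = max_{a ∈ A} ω_a`. -/
def demMax : ℕ := Finset.univ.sup I.dem

/-- A fractional resource allocation for an assignment-MCRA instance (viewed as a map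
on `ℳ`, i.e. on pairs `(a,q)` with `q ∈ 𝒯_{a,E}`); its extension by zero is a
fractional resource allocation for the MCRA instance with all agents binding. -/
def IsFracAlloc (x : I.A → (I.R → ℕ) → ℝ) : Prop :=
  (∀ a, ∀ q ∈ I.bundlesE a, 0 ≤ x a q ∧ x a q ≤ 1) ∧
  (∀ a, ∑ q ∈ I.bundlesE a, x a q = 1) ∧
  (∀ r : I.R, ∑ a, ∑ q ∈ I.bundlesE a, (q r : ℝ) * x a q ≤ (I.cap r : ℝ))

/-- The total utility `U_{ℓ,i}` of group `G_{ℓ,i}` under a mapping `x`. -/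
def groupU (x : I.A → (I.R → ℕ) → ℝ) (ℓ : Fin d) (i : Fin (I.k ℓ)) : ℝ :=
  ∑ a ∈ I.G ℓ i, ∑ q ∈ I.bundlesE a, I.u a q * x a q

/-- The maximum utility `U*_{ℓ,i}` of an agent in group `G_{ℓ,i}`. -/
def groupUMax (ℓ : Fin d) (i : Fin (I.k ℓ)) : ℝ :=
  sSup {v : ℝ | ∃ a ∈ I.G ℓ i, ∃ q ∈ I.bundles a, I.u a q = v}

end AMCRA

namespace AMCRA

variable {d : ℕ} (I : AMCRA d)

/-- `𝓕`: the agent-bundle pairs of `ℳ` on which `x` is fractional. -/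
def fracSupport (x : I.A → (I.R → ℕ) → ℝ) : Finset (I.A × (I.R → ℕ)) :=
  Finset.univ.biUnion fun a =>
    ((I.bundlesE a).filter fun q => 0 < x a q ∧ x a q < 1).image fun q => (a, q)

/-- `𝓕(r)`: the pairs of `𝓕` incident to resource `r`. -/
def Fres (F : Finset (I.A × (I.R → ℕ))) (r : I.R) : Finset (I.A × (I.R → ℕ)) :=
  F.filter fun e => 1 ≤ e.2 r

end AMCRA

/-- **Claim (deviation from resource capacities upon rounding).** Let `x^f` be a
fractional resource allocation for an assignment-MCRA instance, `𝓕` its set of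
fractional entries, `R̃` the set of resources whose capacity constraint is tight at
`x^f`, and `y` a rounding of `x^f`.  Then for every `r ∈ R(𝓕)`: if `r ∈ R̃` then
`∑_a ∑_q q r * y − c r ≤ (∑_{(a,q) ∈ 𝓕(r)} q r) − 1`, and otherwise
`∑_a ∑_q q r * y − c r ≤ ∑_{(a,q) ∈ 𝓕(r)} q r`. -/
theorem rounding_resource_deviation {d : ℕ} (I : AMCRA d)
    (xf : I.A → (I.R → ℕ) → ℝ) (hxf : I.IsFracAlloc xf)
    (y : I.A → (I.R → ℕ) → ℝ)
    (hy : ∀ a, ∀ q ∈ I.bundlesE a,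
      (y a q = 0 ∨ y a q = 1) ∧ (xf a q = 0 → y a q = 0) ∧ (xf a q = 1 → y a q = 1))
    (r : I.R) (hr : (I.Fres (I.fracSupport xf) r).Nonempty) :
    (∑ a, ∑ q ∈ I.bundlesE a, (q r : ℝ) * xf a q = (I.cap r : ℝ) →
      ∑ a, ∑ q ∈ I.bundlesE a, (q r : ℝ) * y a q - (I.cap r : ℝ) ≤
        (∑ e ∈ I.Fres (I.fracSupport xf) r, (e.2 r : ℝ)) - 1) ∧
    (∑ a, ∑ q ∈ I.bundlesE a, (q r : ℝ) * xf a q ≠ (I.cap r : ℝ) →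
      ∑ a, ∑ q ∈ I.bundlesE a, (q r : ℝ) * y a q - (I.cap r : ℝ) ≤
        ∑ e ∈ I.Fres (I.fracSupport xf) r, (e.2 r : ℝ)) := by

  classical
  obtain ⟨hx01, hxsum, hxcap⟩ := hxf
  set F := I.Fres (I.fracSupport xf) r with hF
  -- characterize F as a biUnion of images
  have hFeq : F = Finset.univ.biUnion (fun a =>
      ((I.bundlesE a).filter fun q => (0 < xf a q ∧ xf a q < 1) ∧ 1 ≤ q r).image
        fun q => (a, q)) := by
    ext e
    simp only [hF, AMCRA.Fres, AMCRA.fracSupport, Finset.mem_filter, Finset.mem_biUnion,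
      Finset.mem_image, Finset.mem_univ, true_and]
    constructor
    · rintro ⟨⟨a, q, ⟨hq, hq1, hq2⟩, rfl⟩, hle⟩
      exact ⟨a, q, ⟨hq, ⟨hq1, hq2⟩, hle⟩, rfl⟩
    · rintro ⟨a, q, ⟨hq, ⟨hq1, hq2⟩, hle⟩, rfl⟩
      exact ⟨⟨a, q, ⟨hq, hq1, hq2⟩, rfl⟩, hle⟩
  -- generic sum over F
  have hsumF : ∀ f : I.A → (I.R → ℕ) → ℝ, ∑ e ∈ F, f e.1 e.2 =
      ∑ a, ∑ q ∈ (I.bundlesE a).filter (fun q => (0 < xf a q ∧ xf a q < 1) ∧ 1 ≤ q r),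
        f a q := by
    intro f
    rw [hFeq, Finset.sum_biUnion]
    · refine Finset.sum_congr rfl fun a _ => ?_
      rw [Finset.sum_image]
      intro q _ q' _ h
      exact (Prod.mk.injEq _ _ _ _).mp h |>.2
    · intro a _ b _ hab
      simp only [Finset.disjoint_left, Finset.mem_image]
      rintro e ⟨q, _, rfl⟩ ⟨q', _, he⟩
      exact hab (congrArg Prod.fst he).symm
  -- membership facts for e ∈ F
  have hmem : ∀ e ∈ F, e.2 ∈ I.bundlesE e.1 ∧ (0 < xf e.1 e.2 ∧ xf e.1 e.2 < 1)
      ∧ 1 ≤ e.2 r := by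
    intro e he
    rw [hFeq] at he
    simp only [Finset.mem_biUnion, Finset.mem_image, Finset.mem_univ, true_and,
      Finset.mem_filter] at he
    obtain ⟨a, q, ⟨hq, h1, h2⟩, rfl⟩ := he
    exact ⟨hq, h1, h2⟩
  -- the difference sum localizes to F
  have hS : ∑ a, ∑ q ∈ I.bundlesE a, (q r : ℝ) * (y a q - xf a q) =
      ∑ e ∈ F, (e.2 r : ℝ) * (y e.1 e.2 - xf e.1 e.2) := by
    rw [hsumF fun a q => (q r : ℝ) * (y a q - xf a q)]
    refine Finset.sum_congr rfl fun a _ => ?_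
    symm
    apply Finset.sum_subset (Finset.filter_subset _ _)
    intro q hq hq'
    simp only [Finset.mem_filter, hq, true_and, not_and, not_le] at hq'
    by_cases h1 : 1 ≤ q r
    · have hnot : ¬(0 < xf a q ∧ xf a q < 1) := fun h => absurd h1 (by
        have := hq' h; omega)
      have hb := hx01 a q hq
      have hyq := hy a q hq
      rcases lt_or_eq_of_le hb.1 with hpos | h0
      · rcases lt_or_eq_of_le hb.2 with hlt | h1'
        · exact absurd ⟨hpos, hlt⟩ hnot
        · rw [hyq.2.2 h1', h1']; ring
      · rw [hyq.2.1 h0.symm, ← h0]; ring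
    · have : q r = 0 := by omega
      simp [this]
  have hsub : ∑ a, ∑ q ∈ I.bundlesE a, (q r : ℝ) * y a q
      - ∑ a, ∑ q ∈ I.bundlesE a, (q r : ℝ) * xf a q =
      ∑ a, ∑ q ∈ I.bundlesE a, (q r : ℝ) * (y a q - xf a q) := by
    rw [← Finset.sum_sub_distrib]
    refine Finset.sum_congr rfl fun a _ => ?_
    rw [← Finset.sum_sub_distrib]
    exact Finset.sum_congr rfl fun q _ => by ring
  -- strict termwise bound
  have hterm : ∀ e ∈ F, (e.2 r : ℝ) * (y e.1 e.2 - xf e.1 e.2) < (e.2 r : ℝ) := by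
    intro e he
    obtain ⟨hqE, ⟨hpos, hlt1⟩, hge⟩ := hmem e he
    have hyq := hy e.1 e.2 hqE
    have hy1 : y e.1 e.2 ≤ 1 := by rcases hyq.1 with h | h <;> simp [h]
    have hqpos : (0 : ℝ) < (e.2 r : ℝ) := by exact_mod_cast hge
    calc (e.2 r : ℝ) * (y e.1 e.2 - xf e.1 e.2) < (e.2 r : ℝ) * 1 :=
          mul_lt_mul_of_pos_left (by linarith) hqpos
      _ = (e.2 r : ℝ) := mul_one _
  have hSlt : ∑ e ∈ F, (e.2 r : ℝ) * (y e.1 e.2 - xf e.1 e.2) <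
      ∑ e ∈ F, (e.2 r : ℝ) := Finset.sum_lt_sum_of_nonempty hr hterm
  constructor
  · -- tight case, uses integrality
    intro heq
    -- the y-sum is a natural number
    have hyNat : ∑ a, ∑ q ∈ I.bundlesE a, (q r : ℝ) * y a q =
        ((∑ a, ∑ q ∈ (I.bundlesE a).filter (fun q => y a q = 1), q r : ℕ) : ℝ) := by
      push_cast
      refine Finset.sum_congr rfl fun a _ => ?_
      rw [Finset.sum_filter]
      refine Finset.sum_congr rfl fun q hq => ?_
      rcases (hy a q hq).1 with h | h <;> simp [h]
    have hMNat : ∑ e ∈ F, (e.2 r : ℝ) = ((∑ e ∈ F, e.2 r : ℕ) : ℝ) := by push_cast; rfl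
    set n := ∑ a, ∑ q ∈ (I.bundlesE a).filter (fun q => y a q = 1), q r
    set M := ∑ e ∈ F, e.2 r
    have hlt : (n : ℝ) - (I.cap r : ℝ) < (M : ℝ) := by
      rw [← hyNat, ← hMNat, ← heq, hsub, hS]; exact hSlt
    have hnat : n < M + I.cap r := by
      have : (n : ℝ) < ((M + I.cap r : ℕ) : ℝ) := by push_cast; linarith
      exact_mod_cast this
    have : (n : ℝ) + 1 ≤ ((M + I.cap r : ℕ) : ℝ) := by exact_mod_cast hnat
    rw [hyNat, hMNat]
    push_cast at this ⊢
    linarith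
  · intro _
    have hle := hxcap r
    have := hSlt
    rw [← hS, ← hsub] at this
    linarith
end
end

section
/- For every δ ∈ ℕ₀ and every Δ⁺ ∈ ℕ₀, there exists a fractionally feasible instance I of assignment-MCRA with a single dimension (d = 1) and unit demands (ω_a = 1 for every a ∈ A) that does not admit any (0,δ,Δ⁺)-approximately proportional allocation. -/
open scoped Classical BigOperators

noncomputable section

namespace AMCRA

/-- For a single-dimensional assignment-MCRA instance with `k` groups,
`y` is an `(α,δ,Δ⁺)`-approximately proportional allocation. -/
def IsApproxProp (I : AMCRA 1) (α δ Δp : ℕ) (y : I.A → (I.R → ℕ) → ℝ) : Prop :=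
  (∀ a, ∀ q ∈ I.bundlesE a, y a q = 0 ∨ y a q = 1) ∧
  (∀ a, ∑ q ∈ I.bundlesE a, y a q = 1) ∧
  (∀ r : I.R, ∑ a, ∑ q ∈ I.bundlesE a, (q r : ℝ) * y a q - (I.cap r : ℝ) ≤ (δ : ℝ)) ∧
  (∑ r : I.R, max 0 (∑ a, ∑ q ∈ I.bundlesE a, (q r : ℝ) * y a q - (I.cap r : ℝ)) ≤ (Δp : ℝ)) ∧
  (∀ i : Fin (I.k 0), ∀ x, I.IsFracAlloc x →
    I.groupU x 0 i / (I.k 0 : ℝ) - (α : ℝ) * I.groupUMax 0 i ≤ I.groupU y 0 i)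

end AMCRA


namespace NoPropAux

/-- The bundle consisting of the good resource. -/
def f1 : Bool → ℕ := fun r => if r then 1 else 0

/-- The bundle consisting of the bad resource. -/
def f0 : Bool → ℕ := fun r => if r then 0 else 1

lemma f1_ne_f0 : f1 ≠ f0 := by
  intro h
  have := congrFun h true
  simp [f1, f0] at this

lemma f0_ne_f1 : f0 ≠ f1 := Ne.symm f1_ne_f0

/-- The counterexample instance: `δ+2` agents, each its own group, a good resource
(`true`, capacity 1, utility 1) and a bad resource (`false`, capacity `δ+2`, utility 0). -/
abbrev Inst (δ : ℕ) : AMCRA 1 where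
  A := Fin (δ + 2)
  R := Bool
  k := fun _ => δ + 2
  G := fun _ i => {i}
  G_disjoint := by
    intro ℓ i j hij
    simpa using hij
  dem := fun _ => 1
  dem_pos := fun _ => one_pos
  cap := fun r => if r then 1 else δ + 2
  cap_pos := by intro r; cases r <;> simp
  acc := Finset.univ
  u := fun _ q => (q true : ℝ)
  u_nonneg := fun _ q => Nat.cast_nonneg _

lemma bundlesE_eq (δ : ℕ) (a : (Inst δ).A) :
    (Inst δ).bundlesE a = {f1, f0} := by
  ext q
  simp only [AMCRA.bundlesE, AMCRA.bundles, Finset.mem_filter, Fintype.mem_piFinset,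
    Finset.mem_range, Finset.mem_insert, Finset.mem_singleton, Inst, Finset.mem_univ,
    Fintype.sum_bool]
  constructor
  · rintro ⟨⟨hb, hs⟩, -⟩
    have : (q true = 1 ∧ q false = 0) ∨ (q true = 0 ∧ q false = 1) := by omega
    rcases this with ⟨ht, hf⟩ | ⟨ht, hf⟩
    · left; funext b; cases b <;> simp [f1, ht, hf]
    · right; funext b; cases b <;> simp [f0, ht, hf]
  · rintro (rfl | rfl) <;> simp [f1, f0]

lemma sum_bundlesE (δ : ℕ) (a : (Inst δ).A) (g : (Bool → ℕ) → ℝ) :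
    ∑ q ∈ (Inst δ).bundlesE a, g q = g f1 + g f0 := by
  rw [bundlesE_eq]
  exact Finset.sum_pair f1_ne_f0

end NoPropAux

/-- **Proposition (no exact proportionality with bounded capacity violations).**
For every `δ` and `Δ⁺`, there is a fractionally feasible single-dimensional
assignment-MCRA instance with unit demands admitting no `(0,δ,Δ⁺)`-approximately
proportional allocation. -/
theorem no_exact_proportional (δ Δp : ℕ) :
    ∃ I : AMCRA 1, (∀ a : I.A, I.dem a = 1) ∧ (∃ x, I.IsFracAlloc x) ∧
      ¬ ∃ y : I.A → (I.R → ℕ) → ℝ, AMCRA.IsApproxProp I 0 δ Δp y := by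
  classical
  open NoPropAux in
  have hn : (0:ℝ) < (δ:ℝ) + 2 := by positivity
  have hinv : (0:ℝ) < 1 / ((δ:ℝ) + 2) := by positivity
  have hinv1 : 1 / ((δ:ℝ) + 2) ≤ 1 := by
    rw [div_le_one hn]; linarith [Nat.cast_nonneg (α := ℝ) δ]
  refine ⟨Inst δ, fun a => rfl, ?_, ?_⟩
  · -- fractional feasibility
    refine ⟨fun _ q => if q = f1 then (1:ℝ) / ((δ:ℝ) + 2) else 1 - 1 / ((δ:ℝ) + 2),
      ?_, ?_, ?_⟩
    · intro a q hq
      dsimp only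
      constructor <;> split <;> linarith
    · intro a
      rw [sum_bundlesE]
      dsimp only
      rw [if_pos rfl, if_neg f0_ne_f1]
      ring
    · intro r
      simp only [sum_bundlesE]
      have hf1t : f1 true = 1 := rfl
      have hf0t : f0 true = 0 := rfl
      have hf1f : f1 false = 0 := rfl
      have hf0f : f0 false = 1 := rfl
      cases r
      · -- bad resource
        simp only [if_pos rfl, if_neg f0_ne_f1, hf1f, hf0f, Nat.cast_zero, Nat.cast_one,
          zero_mul, one_mul, zero_add, Finset.sum_const, Finset.card_univ,
          Fintype.card_fin, nsmul_eq_mul]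
        have hcap : ((Inst δ).cap false : ℝ) = (δ:ℝ) + 2 := by
          simp [Inst]
        rw [hcap]
        have hcard : (Fintype.card (Inst δ).A : ℝ) = (δ:ℝ) + 2 := by
          have : Fintype.card (Inst δ).A = δ + 2 := Fintype.card_fin _
          rw [this]; push_cast; ring
        push_cast
        have : ((δ:ℝ) + 2) * (1 - 1 / ((δ:ℝ) + 2)) = (δ:ℝ) + 1 := by
          field_simp
          ring
        rw [this]
        linarith
      · -- good resource
        simp only [if_pos rfl, if_neg f0_ne_f1, hf1t, hf0t, Nat.cast_zero, Nat.cast_one,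
          zero_mul, one_mul, zero_add, add_zero, Finset.sum_const, Finset.card_univ,
          Fintype.card_fin, nsmul_eq_mul]
        have hcap : ((Inst δ).cap true : ℝ) = 1 := by simp [Inst]
        simp only [if_true, Nat.cast_one]
        have hcard : (Fintype.card (Inst δ).A : ℝ) = (δ:ℝ) + 2 := by
          have : Fintype.card (Inst δ).A = δ + 2 := Fintype.card_fin _
          rw [this]; push_cast; ring
        push_cast
        have : ((δ:ℝ) + 2) * (1 / ((δ:ℝ) + 2)) = 1 := by field_simp
        push_cast
        rw [this]
  · -- no approximately proportional allocation
    rintro ⟨y, h01, hsumy, hδ, hΔ, hprop⟩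
    -- every agent must take the good bundle
    have hyf1 : ∀ i : Fin (δ + 2), y i f1 = 1 := by
      intro i
      -- the fractional allocation giving agent i all of the good resource
      set xi : (Inst δ).A → (Bool → ℕ) → ℝ :=
        fun a q => if a = i then (if q = f1 then 1 else 0) else (if q = f1 then 0 else 1)
        with hxi
      have hfrac : (Inst δ).IsFracAlloc xi := by
        refine ⟨?_, ?_, ?_⟩
        · intro a q hq
          simp only [hxi]
          constructor <;> split <;> split <;> norm_num
        · intro a
          rw [sum_bundlesE]
          simp only [hxi, if_pos rfl, if_neg f0_ne_f1]
          split <;> norm_num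
        · intro r
          simp only [bundlesE_eq, Finset.sum_pair f1_ne_f0]
          cases r
          · have hcap : ((Inst δ).cap false : ℝ) = (δ:ℝ) + 2 := by simp [Inst]
            rw [hcap]
            have hterm : ∀ a : (Inst δ).A,
                ((f1 false : ℕ) : ℝ) * xi a f1 + ((f0 false : ℕ) : ℝ) * xi a f0
                  = if a = i then (0:ℝ) else 1 := by
              intro a
              simp only [hxi]
              by_cases h : a = i <;> simp [h, f1, f0, f0_ne_f1]
            rw [Finset.sum_congr rfl fun a _ => hterm a]
            calc ∑ a : (Inst δ).A, (if a = i then (0:ℝ) else 1)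
                ≤ ∑ a : (Inst δ).A, 1 := by
                  apply Finset.sum_le_sum
                  intro a _
                  split <;> norm_num
              _ = (δ:ℝ) + 2 := by
                  rw [Finset.sum_const, Finset.card_univ]
                  have : Fintype.card (Inst δ).A = δ + 2 := Fintype.card_fin _
                  rw [this, nsmul_eq_mul]
                  push_cast
                  ring
          · have hcap : ((Inst δ).cap true : ℝ) = 1 := by simp [Inst]
            rw [hcap]
            have hterm : ∀ a : (Inst δ).A,
                ((f1 true : ℕ) : ℝ) * xi a f1 + ((f0 true : ℕ) : ℝ) * xi a f0
                  = if a = i then (1:ℝ) else 0 := by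
              intro a
              simp only [hxi]
              by_cases h : a = i <;> simp [h, f1, f0, f0_ne_f1]
            rw [Finset.sum_congr rfl fun a _ => hterm a]
            show (∑ a : Fin (δ + 2), if a = i then (1:ℝ) else 0) ≤ 1
            rw [Finset.sum_ite_eq' Finset.univ i (fun _ => (1:ℝ))]
            simp
      have hkey := hprop i xi hfrac
      have hu1 : (Inst δ).u i f1 = 1 := by simp [Inst, f1]
      have hu0 : (Inst δ).u i f0 = 0 := by simp [Inst, f0]
      have hGU_xi : (Inst δ).groupU xi 0 i = 1 := by
        simp only [AMCRA.groupU]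
        have hGi : (Inst δ).G 0 i = {i} := rfl
        rw [Finset.sum_singleton, bundlesE_eq, Finset.sum_pair f1_ne_f0]
        simp only [hxi, if_pos rfl, if_neg f0_ne_f1]
        norm_num [f1, f0]
      have hGU_y : (Inst δ).groupU y 0 i = y i f1 := by
        simp only [AMCRA.groupU]
        have hGi : (Inst δ).G 0 i = {i} := rfl
        rw [Finset.sum_singleton, bundlesE_eq, Finset.sum_pair f1_ne_f0]
        simp [f1, f0]
      rw [hGU_xi, hGU_y] at hkey
      have hk : ((Inst δ).k 0 : ℝ) = (δ:ℝ) + 2 := by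
        show ((δ + 2 : ℕ) : ℝ) = _
        push_cast; ring
      rw [hk] at hkey
      simp only [Nat.cast_zero, zero_mul, sub_zero] at hkey
      have hpos : 0 < y i f1 := lt_of_lt_of_le (by positivity) hkey
      have hmem : f1 ∈ (Inst δ).bundlesE i := by
        rw [bundlesE_eq]; exact Finset.mem_insert_self _ _
      rcases h01 i f1 hmem with h | h
      · rw [h] at hpos; exact absurd hpos (lt_irrefl 0)
      · exact h
    -- the good resource is overloaded by δ + 1 > δ
    have hload := hδ true
    have hcap : ((Inst δ).cap true : ℝ) = 1 := by simp [Inst]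
    have hf1t : f1 true = 1 := rfl
    have hf0t : f0 true = 0 := rfl
    rw [hcap] at hload
    have hsum : ∑ a, ∑ q ∈ (Inst δ).bundlesE a, ((q true : ℕ) : ℝ) * y a q
        = (δ:ℝ) + 2 := by
      simp only [bundlesE_eq, Finset.sum_pair f1_ne_f0, hf1t, hf0t, Nat.cast_zero, Nat.cast_one, zero_mul,
        one_mul, add_zero]
      have h1 : ∑ a : (Inst δ).A, y a f1 = ∑ _a : (Inst δ).A, (1:ℝ) :=
        Finset.sum_congr rfl fun a _ => hyf1 a
      rw [h1, Finset.sum_const, Finset.card_univ]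
      have : Fintype.card (Inst δ).A = δ + 2 := Fintype.card_fin _
      rw [this, nsmul_eq_mul]
      push_cast; ring
    rw [hsum] at hload
    linarith [Nat.cast_nonneg (α := ℝ) δ]
end
end

section
/- For every α ∈ ℕ₀ and every Δ⁺ ∈ ℕ₀, there exists a fractionally feasible instance I of assignment-MCRA with a single dimension (d = 1) and unit demands (ω_a = 1 for every a ∈ A) that does not admit any (α,0,Δ⁺)-approximately proportional allocation. -/
open scoped Classical BigOperators

noncomputable section

/-! ### Auxiliary construction for the counterexample

For a given `n` (playing the role of `α`) we build the following single-dimensional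
instance with unit demands.  There are two groups (indexed by `Fin 2`), each consisting
of a "chain" of `2n+1` agents.  The resources are a shared bottleneck resource `none`
together with one private resource `some a` per agent `a`.  Agent `(g, j)` accepts
exactly two resources: its *good* resource (the previous resource of its chain, which is
the bottleneck `none` when `j = 0`) giving utility `1`, and its *bad* resource
`some (g, j)` giving utility `0`.  All capacities are `1`.

In any integral allocation, if some agent of chain `g` takes its good resource, a
cascading argument shows that agent `(g, 0)` must occupy the bottleneck `none`; since
the bottleneck has capacity one, some chain receives total utility `0`.  But each chain
can fractionally obtain utility `2n+1`, and `(2n+1)/2 - n·1 = 1/2 > 0`, so no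
`(n,0,Δ⁺)`-approximately proportional allocation exists. -/

namespace NoPropCounter

variable {n : ℕ}

/-- Agents: two chains of length `2n+1`. -/
abbrev Ag (n : ℕ) := Fin 2 × Fin (2 * n + 1)

/-- Resources: a shared bottleneck `none` plus one private resource per agent. -/
abbrev Rs (n : ℕ) := Option (Ag n)

/-- The good resource of an agent: the previous resource of its chain. -/
def gres (a : Ag n) : Rs n :=
  if _ : a.2.val = 0 then none
  else some (a.1, ⟨a.2.val - 1, lt_of_le_of_lt (Nat.sub_le _ _) a.2.isLt⟩)

/-- The bad resource of an agent: its own private resource. -/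
def bres (a : Ag n) : Rs n := some a

lemma gres_ne_bres (a : Ag n) : gres a ≠ bres a := by
  unfold gres bres
  split
  · simp
  · next h =>
    intro heq
    rw [Option.some_inj] at heq
    have h2 := congrArg Fin.val (congrArg Prod.snd heq)
    simp only [Fin.val_mk] at h2
    omega

/-- Indicator bundle of a single resource. -/
def unitb (r : Rs n) : Rs n → ℕ := fun r' => if r' = r then 1 else 0

@[simp] lemma unitb_self (r : Rs n) : unitb r r = 1 := by simp [unitb]

lemma unitb_ne {r r' : Rs n} (h : r' ≠ r) : unitb r r' = 0 := by simp [unitb, h]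

lemma unitb_inj {r r' : Rs n} (h : unitb r = unitb r') : r = r' := by
  by_contra hne
  have h1 := congrFun h r
  rw [unitb_self, unitb_ne hne] at h1
  exact one_ne_zero h1

lemma unitb_le_one (r r' : Rs n) : unitb r r' ≤ 1 := by
  unfold unitb; split <;> simp

lemma sum_unitb (r : Rs n) : ∑ r', unitb r r' = 1 := by
  simp [unitb]

/-- The counterexample instance. -/
abbrev Inst (n : ℕ) : AMCRA 1 where
  A := Ag n
  R := Rs n
  fintypeA := inferInstance
  fintypeR := inferInstance
  decEqA := inferInstance
  decEqR := inferInstance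
  k := fun _ => 2
  G := fun _ i => Finset.univ.filter fun a => a.1 = i
  G_disjoint := by
    intro ℓ i j hij
    rw [Finset.disjoint_left]
    intro a ha hb
    simp only [Finset.mem_filter] at ha hb
    exact hij (by rw [← ha.2, ← hb.2])
  dem := fun _ => 1
  dem_pos := fun _ => one_pos
  cap := fun _ => 1
  cap_pos := fun _ => one_pos
  acc := Finset.univ.filter fun p => p.2 = gres p.1 ∨ p.2 = bres p.1
  u := fun a q => (q (gres a) : ℝ)
  u_nonneg := fun _ _ => Nat.cast_nonneg _

lemma mem_acc_iff {a : Ag n} {r : Rs n} :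
    (a, r) ∈ (Inst n).acc ↔ r = gres a ∨ r = bres a := by
  show (a, r) ∈ Finset.univ.filter (fun p : Ag n × Rs n => p.2 = gres p.1 ∨ p.2 = bres p.1) ↔ _
  simp

lemma mem_bundles_iff {a : Ag n} {q : Rs n → ℕ} :
    q ∈ (Inst n).bundles a ↔ (∀ r, q r ≤ 1) ∧ ∑ r, q r = 1 := by
  unfold AMCRA.bundles
  simp only [Finset.mem_filter, Fintype.mem_piFinset, Finset.mem_range]
  show (∀ r, q r < 1 + 1) ∧ (∑ r, q r = 1) ↔ _
  constructor
  · rintro ⟨h1, h2⟩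
    exact ⟨fun r => Nat.lt_succ_iff.mp (h1 r), h2⟩
  · rintro ⟨h1, h2⟩
    exact ⟨fun r => Nat.lt_succ_iff.mpr (h1 r), h2⟩

lemma exists_eq_unitb {a : Ag n} {q : Rs n → ℕ} (hq : q ∈ (Inst n).bundles a) :
    ∃ r, q = unitb r := by
  obtain ⟨hle, hsum⟩ := mem_bundles_iff.mp hq
  have h0 : ∃ r, q r ≠ 0 := by
    by_contra h
    push_neg at h
    simp only [h, Finset.sum_const_zero] at hsum
    exact one_ne_zero hsum.symm
  obtain ⟨r, hr⟩ := h0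
  have hqr : q r = 1 := le_antisymm (hle r) (Nat.one_le_iff_ne_zero.mpr hr)
  refine ⟨r, funext fun r' => ?_⟩
  by_cases h' : r' = r
  · subst h'; simp [unitb, hqr]
  · have hsplit : q r + ∑ x ∈ Finset.univ.erase r, q x = 1 := by
      rw [Finset.add_sum_erase _ q (Finset.mem_univ r)]
      exact hsum
    rw [hqr] at hsplit
    have hz : ∑ x ∈ Finset.univ.erase r, q x = 0 := by omega
    have hq' : q r' = 0 :=
      Finset.sum_eq_zero_iff.mp hz r' (Finset.mem_erase.mpr ⟨h', Finset.mem_univ _⟩)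
    simp [unitb, h', hq']

lemma unitb_mem_bundles (a : Ag n) (r : Rs n) : unitb r ∈ (Inst n).bundles a :=
  mem_bundles_iff.mpr ⟨unitb_le_one r, sum_unitb r⟩

lemma unitb_gres_ne_unitb_bres (a : Ag n) : unitb (gres a) ≠ unitb (bres a) :=
  fun h => gres_ne_bres a (unitb_inj h)

lemma bundlesE_eq (a : Ag n) :
    (Inst n).bundlesE a = {unitb (gres a), unitb (bres a)} := by
  ext q
  unfold AMCRA.bundlesE
  simp only [Finset.mem_filter, Finset.mem_insert, Finset.mem_singleton]
  constructor
  · rintro ⟨hb, hacc⟩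
    obtain ⟨r, rfl⟩ := exists_eq_unitb hb
    have hr : (a, r) ∈ (Inst n).acc := Finset.mem_filter.mpr (hacc r (by simp))
    rcases mem_acc_iff.mp hr with h | h
    · left; rw [h]
    · right; rw [h]
  · have key : ∀ r : Rs n, (a, r) ∈ (Inst n).acc → unitb r ∈ (Inst n).bundles a ∧
        ∀ r', 1 ≤ unitb r r' → (a, r') ∈ (Inst n).acc := by
      intro r hr
      refine ⟨unitb_mem_bundles a r, fun r' h1 => ?_⟩
      have : r' = r := by
        by_contra hne
        rw [unitb_ne hne] at h1
        omega
      rw [this]; exact hr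
    rintro (rfl | rfl)
    · exact ⟨(key _ (mem_acc_iff.mpr (Or.inl rfl))).1,
        fun r' h => Finset.mem_filter.mp ((key _ (mem_acc_iff.mpr (Or.inl rfl))).2 r' h)⟩
    · exact ⟨(key _ (mem_acc_iff.mpr (Or.inr rfl))).1,
        fun r' h => Finset.mem_filter.mp ((key _ (mem_acc_iff.mpr (Or.inr rfl))).2 r' h)⟩

lemma sum_bundlesE (a : Ag n) (F : (Rs n → ℕ) → ℝ) :
    ∑ q ∈ (Inst n).bundlesE a, F q = F (unitb (gres a)) + F (unitb (bres a)) := by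
  rw [bundlesE_eq]
  exact Finset.sum_pair (unitb_gres_ne_unitb_bres a)

lemma u_unitb_gres (a : Ag n) : (Inst n).u a (unitb (gres a)) = 1 := by
  show ((unitb (gres a) (gres a) : ℕ) : ℝ) = 1
  rw [unitb_self]; norm_num

lemma u_unitb_bres (a : Ag n) : (Inst n).u a (unitb (bres a)) = 0 := by
  show ((unitb (bres a) (gres a) : ℕ) : ℝ) = 0
  rw [unitb_ne (gres_ne_bres a)]; norm_num

/-- The integral allocation induced by a choice `f` of one resource per agent. -/
def xf (f : Ag n → Rs n) : Ag n → (Rs n → ℕ) → ℝ := fun a q =>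
  if q = unitb (f a) then 1 else 0

lemma xf_inner_sum (f : Ag n → Rs n) (hacc : ∀ a, f a = gres a ∨ f a = bres a)
    (a : Ag n) (F : (Rs n → ℕ) → ℝ) :
    ∑ q ∈ (Inst n).bundlesE a, F q * xf f a q = F (unitb (f a)) := by
  rw [sum_bundlesE]
  unfold xf
  rcases hacc a with h | h <;> rw [h]
  · rw [if_pos rfl, if_neg ((unitb_gres_ne_unitb_bres a).symm)]
    ring
  · rw [if_neg (unitb_gres_ne_unitb_bres a), if_pos rfl]
    ring

lemma isFracAlloc_xf {f : Ag n → Rs n} (hacc : ∀ a, f a = gres a ∨ f a = bres a)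
    (hinj : Function.Injective f) : (Inst n).IsFracAlloc (xf f) := by
  refine ⟨?_, ?_, ?_⟩
  · intro a q _
    unfold xf
    split <;> norm_num
  · intro a
    have := xf_inner_sum f hacc a (fun _ => (1 : ℝ))
    simpa using this
  · intro r
    have hin : ∀ a : Ag n, ∑ q ∈ (Inst n).bundlesE a, (q r : ℝ) * xf f a q
        = (unitb (f a) r : ℝ) := fun a => xf_inner_sum f hacc a (fun q => (q r : ℝ))
    show ∑ a : Ag n, ∑ q ∈ (Inst n).bundlesE a, (q r : ℝ) * xf f a q ≤ ((1 : ℕ) : ℝ)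
    rw [Finset.sum_congr rfl fun a _ => hin a]
    have hcast : ∀ a : Ag n, ((unitb (f a) r : ℕ) : ℝ) = if r = f a then (1 : ℝ) else 0 := by
      intro a
      unfold unitb
      split <;> norm_num <;> assumption
    rw [Finset.sum_congr rfl fun a _ => hcast a, Finset.sum_boole]
    have hcard : (Finset.univ.filter fun a : Ag n => r = f a).card ≤ 1 := by
      refine Finset.card_le_one.mpr fun a ha b hb => ?_
      simp only [Finset.mem_filter] at ha hb
      exact hinj (ha.2.symm.trans hb.2)
    exact_mod_cast hcard

/-- The choice targeting group `g`: agents of group `g` take their good resource,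
the other agents take their bad resource. -/
def fg (g : Fin 2) : Ag n → Rs n := fun a => if a.1 = g then gres a else bres a

lemma fg_acc (g : Fin 2) : ∀ a : Ag n, fg g a = gres a ∨ fg g a = bres a := by
  intro a
  unfold fg
  split
  · exact Or.inl rfl
  · exact Or.inr rfl

lemma gres_inj_of_fst {a b : Ag n} (hab : a.1 = b.1) (h : gres a = gres b) : a = b := by
  unfold gres at h
  split at h <;> split at h
  · next h1 h2 =>
    refine Prod.ext hab (Fin.ext ?_)
    omega
  · exact absurd h (by simp)
  · exact absurd h (by simp)
  · next h1 h2 =>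
    rw [Option.some_inj] at h
    have h3 := congrArg Fin.val (congrArg Prod.snd h)
    simp only [Fin.val_mk] at h3
    refine Prod.ext hab (Fin.ext ?_)
    omega

lemma fg_inj (g : Fin 2) : Function.Injective (fg (n := n) g) := by
  intro a b h
  unfold fg at h
  split at h <;> split at h
  · next ha hb => exact gres_inj_of_fst (ha.trans hb.symm) h
  · next ha hb =>
    exfalso
    unfold gres bres at h
    split at h
    · exact absurd h (by simp)
    · rw [Option.some_inj] at h
      have h1 := congrArg Prod.fst h
      simp only at h1
      exact hb (h1 ▸ ha)
  · next ha hb =>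
    exfalso
    unfold gres bres at h
    split at h
    · exact absurd h (by simp)
    · rw [Option.some_inj] at h
      have h1 := congrArg Prod.fst h
      simp only at h1
      exact ha (h1.symm ▸ hb)
  · next _ _ =>
    unfold bres at h
    exact Option.some_injective _ h

lemma card_group (g : Fin 2) :
    (Finset.univ.filter fun a : Ag n => a.1 = g).card = 2 * n + 1 := by
  have : (Finset.univ.filter fun a : Ag n => a.1 = g)
      = {g} ×ˢ (Finset.univ : Finset (Fin (2 * n + 1))) := by
    ext a
    simp only [Finset.mem_filter, Finset.mem_univ, true_and, Finset.mem_product,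
      Finset.mem_singleton]
    tauto
  rw [this, Finset.card_product]
  simp

lemma groupU_xf_fg (g : Fin 2) :
    (Inst n).groupU (xf (fg g)) 0 g = ((2 * n + 1 : ℕ) : ℝ) := by
  unfold AMCRA.groupU
  have hterm : ∀ a ∈ (Inst n).G 0 g,
      ∑ q ∈ (Inst n).bundlesE a, (Inst n).u a q * xf (fg g) a q = 1 := by
    intro a ha
    have ha1 : a.1 = g := by
      have hmem : a ∈ Finset.univ.filter fun a : Ag n => a.1 = g := ha
      exact (Finset.mem_filter.mp hmem).2
    rw [xf_inner_sum (fg g) (fg_acc g) a ((Inst n).u a)]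
    have hfa : fg g a = gres a := by unfold fg; rw [if_pos ha1]
    rw [hfa, u_unitb_gres]
  rw [Finset.sum_congr rfl hterm, Finset.sum_const]
  have hcard : ((Inst n).G 0 g).card = 2 * n + 1 := card_group g
  rw [hcard]
  simp

lemma groupUMax_le_one (i : Fin 2) : (Inst n).groupUMax 0 i ≤ 1 := by
  unfold AMCRA.groupUMax
  apply Real.sSup_le _ zero_le_one
  rintro v ⟨a, _, q, hq, rfl⟩
  show ((q (gres a) : ℕ) : ℝ) ≤ 1
  have := (mem_bundles_iff.mp hq).1 (gres a)
  exact_mod_cast this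

end NoPropCounter

/-- **Proposition (no approximate proportionality without capacity violations).**
For every `α` and `Δ⁺`, there is a fractionally feasible single-dimensional
assignment-MCRA instance with unit demands admitting no `(α,0,Δ⁺)`-approximately
proportional allocation. -/
theorem no_proportional_without_capacity_violation (α Δp : ℕ) :
    ∃ I : AMCRA 1, (∀ a : I.A, I.dem a = 1) ∧ (∃ x, I.IsFracAlloc x) ∧
      ¬ ∃ y : I.A → (I.R → ℕ) → ℝ, AMCRA.IsApproxProp I α 0 Δp y := by
  classical
  refine ⟨NoPropCounter.Inst α, fun _ => rfl, ?_, ?_⟩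
  · exact ⟨NoPropCounter.xf NoPropCounter.bres,
      NoPropCounter.isFracAlloc_xf (fun a => Or.inr rfl)
        (fun a b h => Option.some_injective _ h)⟩
  · rintro ⟨y, h01, hsum1, hcap, -, hprop⟩
    open NoPropCounter in
    -- dichotomy: every agent either takes its good resource or its bad resource
    have hmemg : ∀ a : Ag α, unitb (gres a) ∈ (Inst α).bundlesE a := by
      intro a; rw [bundlesE_eq]; simp
    have hmemb : ∀ a : Ag α, unitb (bres a) ∈ (Inst α).bundlesE a := by
      intro a; rw [bundlesE_eq]; simp
    have hdich : ∀ a : Ag α,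
        (y a (unitb (gres a)) = 1 ∧ y a (unitb (bres a)) = 0) ∨
        (y a (unitb (gres a)) = 0 ∧ y a (unitb (bres a)) = 1) := by
      intro a
      have hs := hsum1 a
      rw [sum_bundlesE a (y a)] at hs
      rcases h01 a _ (hmemg a) with hg | hg <;> rcases h01 a _ (hmemb a) with hb | hb
      · exfalso; rw [hg, hb] at hs; norm_num at hs
      · exact Or.inr ⟨hg, hb⟩
      · exact Or.inl ⟨hg, hb⟩
      · exfalso; rw [hg, hb] at hs; norm_num at hs
    -- per-agent load on each resource
    set L : Ag α → Rs α → ℝ := fun a r =>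
      (unitb (gres a) r : ℝ) * y a (unitb (gres a)) +
      (unitb (bres a) r : ℝ) * y a (unitb (bres a)) with hL
    have hLnonneg : ∀ a r, 0 ≤ L a r := by
      intro a r
      rcases hdich a with ⟨hg, hb⟩ | ⟨hg, hb⟩ <;> simp only [hL] <;>
        simp only [hg, hb] <;> positivity
    have hload : ∀ r : Rs α, ∑ a : Ag α, L a r ≤ 1 := by
      intro r
      have h : ∑ a : Ag α, ∑ q ∈ (Inst α).bundlesE a, (q r : ℝ) * y a q
          - ((1 : ℕ) : ℝ) ≤ ((0 : ℕ) : ℝ) := hcap r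
      rw [show (∑ a : Ag α, ∑ q ∈ (Inst α).bundlesE a, (q r : ℝ) * y a q)
          = ∑ a : Ag α, L a r from
        Finset.sum_congr rfl fun a _ => sum_bundlesE a (fun q => (q r : ℝ) * y a q)] at h
      simp only [Nat.cast_one, Nat.cast_zero] at h
      linarith
    have hconf : ∀ a b : Ag α, a ≠ b → ∀ r : Rs α, L a r = 1 → L b r = 1 → False := by
      intro a b hab r ha hb
      have h2 : ∑ c ∈ ({a, b} : Finset (Ag α)), L c r ≤ ∑ c : Ag α, L c r :=
        Finset.sum_le_sum_of_subset_of_nonneg (Finset.subset_univ _)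
          fun c _ _ => hLnonneg c r
      rw [Finset.sum_pair hab, ha, hb] at h2
      have := hload r
      linarith
    -- if an agent takes its good resource, its load on it is 1; similarly for bad
    have hLg : ∀ a : Ag α, y a (unitb (gres a)) = 1 → L a (gres a) = 1 := by
      intro a hg
      rcases hdich a with ⟨-, hb⟩ | ⟨hg', -⟩
      · simp only [hL]; simp only [unitb_self, hg, hb]; norm_num
      · rw [hg'] at hg; norm_num at hg
    have hLb : ∀ a : Ag α, ¬ y a (unitb (gres a)) = 1 → L a (bres a) = 1 := by
      intro a hg
      rcases hdich a with ⟨hg', -⟩ | ⟨hg', hb⟩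
      · exact absurd hg' hg
      · simp only [hL]; simp only [unitb_self, hg', hb]; norm_num
    -- the chain argument
    have hzero : (0 : ℕ) < 2 * α + 1 := by omega
    have chain : ∀ g : Fin 2, ∀ t : ℕ, ∀ ht : t < 2 * α + 1,
        y (g, ⟨t, ht⟩) (unitb (gres (g, ⟨t, ht⟩))) = 1 →
        y (g, ⟨0, hzero⟩) (unitb (gres (g, ⟨0, hzero⟩))) = 1 := by
      intro g t
      induction t with
      | zero => intro ht h; exact h
      | succ t ih =>
        intro ht hP
        have ht' : t < 2 * α + 1 := by omega
        have hg : gres ((g, ⟨t + 1, ht⟩) : Ag α) = some (g, ⟨t, ht'⟩) := by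
          unfold gres
          rw [dif_neg (by simp)]
          simp only [Option.some_inj, Prod.mk.injEq, Fin.mk.injEq]
          exact ⟨trivial, by omega⟩
        by_cases hPt : y ((g, ⟨t, ht'⟩) : Ag α) (unitb (gres ((g, ⟨t, ht'⟩) : Ag α))) = 1
        · exact ih ht' hPt
        · exfalso
          refine hconf (g, ⟨t + 1, ht⟩) (g, ⟨t, ht'⟩) ?_ (some (g, ⟨t, ht'⟩)) ?_ ?_
          · intro hteq
            have := congrArg Fin.val (congrArg Prod.snd hteq)
            simp only [Fin.val_mk] at this
            omega
          · rw [← hg]; exact hLg _ hP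
          · have hbr : bres ((g, ⟨t, ht'⟩) : Ag α) = some (g, ⟨t, ht'⟩) := rfl
            rw [← hbr]; exact hLb _ hPt
    -- heads of both chains need the bottleneck, so one chain is entirely bad
    have hhead : ∀ g : Fin 2, gres ((g, ⟨0, hzero⟩) : Ag α) = none := by
      intro g; unfold gres; rw [dif_pos rfl]
    have hexg : ∃ g : Fin 2, ∀ t : ℕ, ∀ ht : t < 2 * α + 1,
        ¬ y ((g, ⟨t, ht⟩) : Ag α) (unitb (gres ((g, ⟨t, ht⟩) : Ag α))) = 1 := by
      by_cases h0 : y (((0 : Fin 2), ⟨0, hzero⟩) : Ag α)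
          (unitb (gres (((0 : Fin 2), ⟨0, hzero⟩) : Ag α))) = 1
      · refine ⟨1, fun t ht hPt => ?_⟩
        have h1 := chain 1 t ht hPt
        refine hconf ((0 : Fin 2), ⟨0, hzero⟩) ((1 : Fin 2), ⟨0, hzero⟩) ?_ none ?_ ?_
        · intro hq
          have := congrArg Prod.fst hq
          simp only at this
          exact absurd this (by decide)
        · rw [← hhead 0]; exact hLg _ h0
        · rw [← hhead 1]; exact hLg _ h1
      · exact ⟨0, fun t ht hPt => h0 (chain 0 t ht hPt)⟩
    obtain ⟨g, hgbad⟩ := hexg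
    -- group g has total utility 0 under y
    have hUy : (Inst α).groupU y 0 g = 0 := by
      unfold AMCRA.groupU
      apply Finset.sum_eq_zero
      intro a ha
      have ha1 : a.1 = g := by
        have hmem : a ∈ Finset.univ.filter fun a : Ag α => a.1 = g := ha
        exact (Finset.mem_filter.mp hmem).2
      have hnP : ¬ y a (unitb (gres a)) = 1 := by
        have hbad := hgbad a.2.val a.2.isLt
        have ha' : ((g, ⟨a.2.val, a.2.isLt⟩) : Ag α) = a := by
          rw [← ha1]
        rwa [ha'] at hbad
      rcases hdich a with ⟨hg', -⟩ | ⟨hg', hb⟩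
      · exact absurd hg' hnP
      · rw [sum_bundlesE a (fun q => (Inst α).u a q * y a q), hg', hb, u_unitb_bres]
        ring
    -- apply proportionality with the fractional allocation targeting group g
    have hx := isFracAlloc_xf (fg_acc (n := α) g) (fg_inj (n := α) g)
    have hp := hprop g _ hx
    rw [groupU_xf_fg g, hUy] at hp
    have hk : (((Inst α).k 0 : ℕ) : ℝ) = 2 := by
      show ((2 : ℕ) : ℝ) = 2
      norm_num
    rw [hk] at hp
    have hUM : (Inst α).groupUMax 0 g ≤ 1 := groupUMax_le_one g
    have hmul : (α : ℝ) * (Inst α).groupUMax 0 g ≤ (α : ℝ) * 1 :=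
      mul_le_mul_of_nonneg_left hUM (Nat.cast_nonneg α)
    have hcast : ((2 * α + 1 : ℕ) : ℝ) = 2 * (α : ℝ) + 1 := by push_cast; ring
    rw [hcast] at hp
    linarith
end
end
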